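/- arXiv:1704.03122 — 6 statements merged into one kernel-verified Lean document; each statement's English description precedes it below -/
import Mathlib

section
/- Let n ≥ 6 be an integer and let G be a connected simple graph on n vertices such that the multiplicity of the largest distance Laplacian eigenvalue ∂L_1 of G equals n−3. Then ∂L_1 is an integer. -/
open Polynomial


open Matrix

/-- The distance Laplacian matrix of a graph: diagonal entries are the transmissions
`Tr(v) = ∑ u, d(v,u)`, off-diagonal entries are `-d(u,v)`. -/
noncomputable def distLaplacian {V : Type*} [Fintype V] [DecidableEq V]
    (G : SimpleGraph V) : Matrix V V ℝ :=
  Matrix.of fun i j => if i = j then ∑ k : V, (G.dist i k : ℝ) else -(G.dist i j : ℝ)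

/-- The multiplicity of `μ` as an eigenvalue of `M`, i.e. the dimension of the
corresponding eigenspace. -/
noncomputable def eigMult {V : Type*} [Fintype V] (M : Matrix V V ℝ) (μ : ℝ) : ℕ :=
  Module.finrank ℝ (Module.End.eigenspace M.mulVecLin μ)

/-- The largest eigenvalue of a matrix. -/
noncomputable def lambdaMax {V : Type*} [Fintype V] (M : Matrix V V ℝ) : ℝ :=
  sSup {μ : ℝ | Module.End.HasEigenvalue M.mulVecLin μ}

/-- The transmission of a vertex. -/
noncomputable def transmission {V : Type*} [Fintype V] (G : SimpleGraph V) (v : V) : ℕ :=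
  ∑ u : V, G.dist v u

section Aux

variable {m : Type*} [Fintype m] [DecidableEq m]

lemma aux_charmatrix_diagonal (d : m → ℝ) :
    charmatrix (diagonal d) = diagonal fun i => (X : ℝ[X]) - C (d i) := by
  ext i j
  by_cases h : i = j
  · subst h; simp
  · simp [h, charmatrix_apply_ne _ _ _ h, diagonal_apply_ne _ h]

lemma aux_charpoly_conj (U D : Matrix m m ℝ) (hU : U * star U = 1) (hU' : star U * U = 1) :
    (U * D * star U).charpoly = D.charpoly := by
  unfold Matrix.charpoly
  have hscalar : Matrix.scalar m (X : ℝ[X]) = (X : ℝ[X]) • (1 : Matrix m m ℝ[X]) := by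
    rw [Matrix.scalar_apply, Matrix.smul_one_eq_diagonal]
  have hmap : ∀ (P Q : Matrix m m ℝ), ((C : ℝ →+* ℝ[X]).mapMatrix (P * Q)) =
      (C : ℝ →+* ℝ[X]).mapMatrix P * (C : ℝ →+* ℝ[X]).mapMatrix Q := fun P Q => map_mul _ _ _
  have key : charmatrix (U * D * star U)
      = (C : ℝ →+* ℝ[X]).mapMatrix U * charmatrix D * (C : ℝ →+* ℝ[X]).mapMatrix (star U) := by
    unfold charmatrix
    rw [mul_sub, sub_mul, ← hmap, ← hmap]
    congr 1
    symm
    rw [hscalar, mul_smul_comm, smul_mul_assoc, mul_one, ← hmap, hU, _root_.map_one]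
  rw [key, det_mul, det_mul, mul_comm, ← mul_assoc, ← det_mul, ← hmap, hU', _root_.map_one, det_one,
    one_mul]

lemma aux_charpoly_prod {A : Matrix m m ℝ} (hA : A.IsHermitian) :
    A.charpoly = ∏ i, ((X : ℝ[X]) - C (hA.eigenvalues i)) := by
  have hsp := hA.spectral_theorem
  have hof : (RCLike.ofReal ∘ hA.eigenvalues : m → ℝ) = hA.eigenvalues := by
    funext i; simp
  rw [hof] at hsp
  have h1 : A.charpoly = (diagonal hA.eigenvalues).charpoly := by
    conv_lhs => rw [hsp]
    exact aux_charpoly_conj _ _ (mem_unitaryGroup_iff.mp (hA.eigenvectorUnitary).2)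
      (mem_unitaryGroup_iff'.mp (hA.eigenvectorUnitary).2)
  rw [h1]
  unfold Matrix.charpoly
  rw [aux_charmatrix_diagonal, det_diagonal]

lemma aux_finrank_eigenspace {A : Matrix m m ℝ} (hA : A.IsHermitian) (μ : ℝ) :
    Module.finrank ℝ (Module.End.eigenspace A.mulVecLin μ)
      = Fintype.card {i // hA.eigenvalues i = μ} := by
  classical
  have hsp := hA.spectral_theorem
  have hof : (RCLike.ofReal ∘ hA.eigenvalues : m → ℝ) = hA.eigenvalues := by
    funext i; simp
  rw [hof] at hsp
  set U : Matrix m m ℝ := (hA.eigenvectorUnitary : Matrix m m ℝ) with hUdef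
  have hU : U * star U = 1 := mem_unitaryGroup_iff.mp (hA.eigenvectorUnitary).2
  have hU' : star U * U = 1 := mem_unitaryGroup_iff'.mp (hA.eigenvectorUnitary).2
  have hBdecomp : A - μ • (1 : Matrix m m ℝ)
      = U * diagonal (fun i => hA.eigenvalues i - μ) * star U := by
    have : diagonal (fun i => hA.eigenvalues i - μ)
        = diagonal hA.eigenvalues - μ • (1 : Matrix m m ℝ) := by
      rw [Matrix.smul_one_eq_diagonal, diagonal_sub]
    rw [this, mul_sub, sub_mul, ← (show A = U * diagonal hA.eigenvalues * star U from hsp)]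
    congr 1
    rw [mul_smul_comm, smul_mul_assoc, mul_one, hU]
  have hdetU : IsUnit U.det ∧ IsUnit (star U).det := by
    have h := congrArg Matrix.det hU
    rw [det_mul, det_one] at h
    exact ⟨IsUnit.of_mul_eq_one _ h, IsUnit.of_mul_eq_one _ (by rw [mul_comm] at h; exact h)⟩
  have hrank : (A - μ • (1 : Matrix m m ℝ)).rank
      = Fintype.card {i // hA.eigenvalues i - μ ≠ 0} := by
    rw [hBdecomp, rank_mul_eq_left_of_isUnit_det _ _ hdetU.2,
      rank_mul_eq_right_of_isUnit_det _ _ hdetU.1, rank_diagonal]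
  have hker : Module.End.eigenspace A.mulVecLin μ
      = LinearMap.ker (A - μ • (1 : Matrix m m ℝ)).mulVecLin := by
    rw [Module.End.eigenspace_def]
    congr 1
    refine LinearMap.ext fun v => ?_
    simp [mulVecLin_apply, sub_mulVec, smul_mulVec, one_mulVec]
  have hrn := LinearMap.finrank_range_add_finrank_ker
    ((A - μ • (1 : Matrix m m ℝ)).mulVecLin)
  rw [Module.finrank_pi] at hrn
  have hrank' : (A - μ • (1 : Matrix m m ℝ)).rank
      = Module.finrank ℝ (LinearMap.range (A - μ • (1 : Matrix m m ℝ)).mulVecLin) := rfl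
  have hcompl : Fintype.card {i // hA.eigenvalues i = μ}
      + Fintype.card {i // hA.eigenvalues i - μ ≠ 0} = Fintype.card m := by
    have : ∀ i : m, hA.eigenvalues i - μ ≠ 0 ↔ ¬ (hA.eigenvalues i = μ) := by
      intro i; rw [sub_ne_zero]
    rw [Fintype.card_congr (Equiv.subtypeEquivRight this), Fintype.card_subtype_compl]
    have hle : Fintype.card {i // hA.eigenvalues i = μ} ≤ Fintype.card m :=
      Fintype.card_subtype_le _
    omega
  rw [hker]
  omega

lemma aux_minpoly_pow_dvd (μ : ℝ) (hint : IsIntegral ℚ μ) (p : ℚ[X]) (hp : p ≠ 0) (k : ℕ)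
    (h : ((X : ℝ[X]) - C μ) ^ k ∣ p.map (algebraMap ℚ ℝ)) : (minpoly ℚ μ) ^ k ∣ p := by
  induction k with
  | zero => simpa using one_dvd p
  | succ k ih =>
    obtain ⟨r, hr⟩ := ih (dvd_trans (pow_dvd_pow _ (Nat.le_succ k)) h)
    set M : ℚ[X] := minpoly ℚ μ with hM
    have hM0 : M ≠ 0 := minpoly.ne_zero hint
    have hMirr : Irreducible M := minpoly.irreducible hint
    have hmap0 : p.map (algebraMap ℚ ℝ) ≠ 0 :=
      (Polynomial.map_ne_zero_iff (algebraMap ℚ ℝ).injective).mpr hp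
    -- root multiplicity of μ in map M is 1
    have hroot : Polynomial.IsRoot (M.map (algebraMap ℚ ℝ)) μ := by
      rw [Polynomial.IsRoot, Polynomial.eval_map, ← Polynomial.aeval_def]
      exact minpoly.aeval ℚ μ
    have hsep : (M.map (algebraMap ℚ ℝ)).Separable := (hMirr.separable).map
    have hnodup : (M.map (algebraMap ℚ ℝ)).roots.Nodup := Polynomial.nodup_roots hsep
    have hMmap0 : M.map (algebraMap ℚ ℝ) ≠ 0 :=
      (Polynomial.map_ne_zero_iff (algebraMap ℚ ℝ).injective).mpr hM0
    have hmult1 : Polynomial.rootMultiplicity μ (M.map (algebraMap ℚ ℝ)) = 1 := by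
      have h1 : 1 ≤ Polynomial.rootMultiplicity μ (M.map (algebraMap ℚ ℝ)) :=
        (Polynomial.rootMultiplicity_pos hMmap0).mpr hroot
      have h2 : Polynomial.rootMultiplicity μ (M.map (algebraMap ℚ ℝ)) ≤ 1 := by
        rw [← Polynomial.count_roots]
        exact Multiset.nodup_iff_count_le_one.mp hnodup μ
      omega
    -- μ is a root of map r
    have hrroot : Polynomial.IsRoot (r.map (algebraMap ℚ ℝ)) μ := by
      by_contra hc
      have hr0 : r ≠ 0 := by rintro rfl; rw [mul_zero] at hr; exact hp hr
      have hrmap0 : r.map (algebraMap ℚ ℝ) ≠ 0 :=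
        (Polynomial.map_ne_zero_iff (algebraMap ℚ ℝ).injective).mpr hr0
      have hkk : (k : ℕ) + 1 ≤ Polynomial.rootMultiplicity μ (p.map (algebraMap ℚ ℝ)) := by
        rw [← Polynomial.le_rootMultiplicity_iff hmap0] at h
        exact h
      have hdecomp : p.map (algebraMap ℚ ℝ)
          = (M.map (algebraMap ℚ ℝ)) ^ k * r.map (algebraMap ℚ ℝ) := by
        rw [hr, Polynomial.map_mul, Polynomial.map_pow]
      rw [hdecomp, Polynomial.rootMultiplicity_mul (by
          rw [← hdecomp]; exact hmap0)] at hkk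
      have hpowmult : Polynomial.rootMultiplicity μ ((M.map (algebraMap ℚ ℝ)) ^ k) = k := by
        rw [← Polynomial.count_roots, Polynomial.roots_pow, Multiset.count_nsmul,
          Polynomial.count_roots, hmult1, mul_one]
      rw [hpowmult, Polynomial.rootMultiplicity_eq_zero hc] at hkk
      omega
    have : M ∣ r := by
      apply minpoly.dvd
      rw [Polynomial.aeval_def, ← Polynomial.eval_map]
      exact hrroot
    obtain ⟨s, hs⟩ := this
    exact ⟨s, by rw [hr, hs, pow_succ, mul_assoc]⟩

end Aux

/-- If `G` is a connected graph on `n ≥ 6` vertices whose largest distance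
Laplacian eigenvalue `∂ᴸ₁` has multiplicity `n - 3`, then `∂ᴸ₁` is an integer. -/

theorem largest_distLaplacian_eigenvalue_integral
    (n : ℕ) (hn : 6 ≤ n) (G : SimpleGraph (Fin n)) (hG : G.Connected)
    (hmult : eigMult (distLaplacian G) (lambdaMax (distLaplacian G)) = n - 3) :
    ∃ z : ℤ, lambdaMax (distLaplacian G) = (z : ℝ) := by
  classical
  set A : Matrix (Fin n) (Fin n) ℝ := distLaplacian G with hAdef
  set μ : ℝ := lambdaMax A with hμdef
  have hA : A.IsHermitian := by
    show Aᴴ = A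
    ext i j
    by_cases h : i = j
    · subst h; simp [hAdef, distLaplacian, conjTranspose_apply]
    · simp only [conjTranspose_apply, hAdef, distLaplacian, Matrix.of_apply, star_trivial]
      rw [if_neg (Ne.symm h), if_neg h, SimpleGraph.dist_comm]
  have hmult' : Module.finrank ℝ (Module.End.eigenspace A.mulVecLin μ) = n - 3 := hmult
  have hcard : Fintype.card {i // hA.eigenvalues i = μ} = n - 3 := by
    rw [← aux_finrank_eigenspace hA μ]; exact hmult'
  have hprod : A.charpoly = ∏ i, ((X : ℝ[X]) - C (hA.eigenvalues i)) := aux_charpoly_prod hA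
  have hroots : A.charpoly.roots = Finset.univ.val.map hA.eigenvalues := by
    rw [hprod, Finset.prod_eq_multiset_prod]
    have h0 := Polynomial.roots_multiset_prod_X_sub_C (Finset.univ.val.map hA.eigenvalues)
    rw [Multiset.map_map] at h0
    simpa [Function.comp] using h0
  have hcount : A.charpoly.roots.count μ = n - 3 := by
    rw [hroots, Multiset.count_map, ← hcard, Fintype.card_subtype]
    simp only [Finset.card, Finset.filter_val]
    exact congrArg Multiset.card (Multiset.filter_congr fun i _ => eq_comm)
  have hrm : Polynomial.rootMultiplicity μ A.charpoly = n - 3 := by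
    rw [← Polynomial.count_roots]; exact hcount
  have hpne : A.charpoly ≠ 0 := (Matrix.charpoly_monic A).ne_zero
  have hdvd : ((X : ℝ[X]) - C μ) ^ (n - 3) ∣ A.charpoly := by
    rw [← hrm]; exact Polynomial.pow_rootMultiplicity_dvd _ _
  -- integer model
  set Dz : Matrix (Fin n) (Fin n) ℤ :=
    Matrix.of (fun i j => if i = j then ∑ k : Fin n, (G.dist i k : ℤ) else -(G.dist i j : ℤ))
    with hDzdef
  have hmapz : Dz.map (Int.castRingHom ℝ) = A := by
    ext i j
    by_cases h : i = j <;>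
      simp [hDzdef, hAdef, distLaplacian, Matrix.map_apply, h] <;> push_cast <;> ring
  set q : Polynomial ℚ := Dz.charpoly.map (Int.castRingHom ℚ) with hqdef
  have hq : q.map (algebraMap ℚ ℝ) = A.charpoly := by
    rw [hqdef, Polynomial.map_map, ← hmapz, Matrix.charpoly_map]
    congr 1
  have hqmonic : q.Monic := (Matrix.charpoly_monic Dz).map _
  have hq0 : q ≠ 0 := hqmonic.ne_zero
  have hqdeg : q.natDegree = n := by
    rw [hqdef, (Matrix.charpoly_monic Dz).natDegree_map, Matrix.charpoly_natDegree_eq_dim,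
      Fintype.card_fin]
  have hμroot : A.charpoly.IsRoot μ := by
    refine (Polynomial.rootMultiplicity_pos hpne).mp ?_
    rw [hrm]; omega
  have hintZ : IsIntegral ℤ μ := by
    refine ⟨Dz.charpoly, Matrix.charpoly_monic Dz, ?_⟩
    show Polynomial.eval₂ (algebraMap ℤ ℝ) μ Dz.charpoly = 0
    rw [← Polynomial.eval_map]
    have h1 : Dz.charpoly.map (algebraMap ℤ ℝ) = A.charpoly := by
      rw [← hmapz, Matrix.charpoly_map]
      congr 1
    rw [h1]; exact hμroot
  have hintQ : IsIntegral ℚ μ := by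
    refine ⟨q, hqmonic, ?_⟩
    show Polynomial.eval₂ (algebraMap ℚ ℝ) μ q = 0
    rw [← Polynomial.eval_map, hq]; exact hμroot
  have hMdvd : (minpoly ℚ μ) ^ (n - 3) ∣ q :=
    aux_minpoly_pow_dvd μ hintQ q hq0 (n - 3) (by rw [hq]; exact hdvd)
  -- 0 is a root
  have hrow : ∀ i : Fin n, ∑ j, A i j = 0 := by
    intro i
    have h1 : ∑ j, A i j = A i i + ∑ j ∈ Finset.univ.erase i, A i j :=
      (Finset.add_sum_erase _ _ (Finset.mem_univ i)).symm
    have h2 : ∀ j ∈ Finset.univ.erase i, A i j = -(G.dist i j : ℝ) := by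
      intro j hj
      have hne : i ≠ j := (Finset.ne_of_mem_erase hj).symm
      simp [hAdef, distLaplacian, hne]
    have h3 : A i i = ∑ k, (G.dist i k : ℝ) := by simp [hAdef, distLaplacian]
    have h4 : ∑ j ∈ Finset.univ.erase i, (G.dist i j : ℝ) + (G.dist i i : ℝ)
        = ∑ j, (G.dist i j : ℝ) := Finset.sum_erase_add _ _ (Finset.mem_univ i)
    rw [h1, h3, Finset.sum_congr rfl h2]
    simp only [SimpleGraph.dist_self, Nat.cast_zero, add_zero] at h4
    rw [Finset.sum_neg_distrib, h4]
    ring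
  have hones : A *ᵥ (fun _ => (1 : ℝ)) = 0 := by
    funext i
    simp only [Matrix.mulVec, dotProduct, mul_one, Pi.zero_apply]
    exact hrow i
  have honesne : (fun _ => (1 : ℝ)) ≠ (0 : Fin n → ℝ) := by
    intro h
    have := congrFun h ⟨0, by omega⟩
    norm_num at this
  have hdet : A.det = 0 := (Matrix.exists_mulVec_eq_zero_iff).mp ⟨_, honesne, hones⟩
  have hc0 : A.charpoly.coeff 0 = 0 := by
    have h5 := Matrix.det_eq_sign_charpoly_coeff A
    rw [hdet] at h5
    rcases mul_eq_zero.mp h5.symm with h | h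
    · exact absurd h (pow_ne_zero _ (by norm_num))
    · exact h
  have hqc0 : q.coeff 0 = 0 := by
    have h6 : (algebraMap ℚ ℝ) (q.coeff 0) = 0 := by
      rw [← Polynomial.coeff_map, hq, hc0]
    exact (_root_.map_eq_zero _).mp h6
  have hXdvd : (X : Polynomial ℚ) ∣ q := Polynomial.X_dvd_iff.mpr hqc0
  by_cases hdeg : (minpoly ℚ μ).natDegree = 1
  · obtain ⟨c, hc⟩ := minpoly.natDegree_eq_one_iff.mp hdeg
    have hcint : IsIntegral ℤ c := by
      refine (isIntegral_algebraMap_iff (algebraMap ℚ ℝ).injective).mp ?_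
      rw [hc]; exact hintZ
    obtain ⟨z, hz⟩ := IsIntegrallyClosed.isIntegral_iff.mp hcint
    refine ⟨z, ?_⟩
    rw [← hc, ← hz]
    simp
  · exfalso
    have h2 : 2 ≤ (minpoly ℚ μ).natDegree := by
      have := minpoly.natDegree_pos hintQ
      omega
    have hXM : ¬ (X : Polynomial ℚ) ∣ minpoly ℚ μ := by
      intro hdvd'
      obtain ⟨u, huu⟩ :=
        (Polynomial.irreducible_X.associated_of_dvd (minpoly.irreducible hintQ) hdvd')
      have hu0 : (u : Polynomial ℚ) ≠ 0 := Units.ne_zero u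
      have : (minpoly ℚ μ).natDegree = 1 := by
        rw [← huu, Polynomial.natDegree_mul Polynomial.X_ne_zero hu0, Polynomial.natDegree_X,
          Polynomial.natDegree_eq_zero_of_isUnit u.isUnit]
      omega
    have hcop : IsCoprime (X : Polynomial ℚ) ((minpoly ℚ μ) ^ (n - 3)) :=
      (Polynomial.irreducible_X.coprime_iff_not_dvd.mpr hXM).pow_right
    have hmul : (X : Polynomial ℚ) * (minpoly ℚ μ) ^ (n - 3) ∣ q := hcop.mul_dvd hXdvd hMdvd
    have hle := Polynomial.natDegree_le_of_dvd hmul hq0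
    rw [Polynomial.natDegree_mul Polynomial.X_ne_zero
        (pow_ne_zero _ (minpoly.ne_zero hintQ)), Polynomial.natDegree_X,
      Polynomial.natDegree_pow, hqdeg] at hle
    have hmm := Nat.mul_le_mul_left (n - 3) h2
    omega
end

section
/- Let n ≥ 5 and let G be a connected simple graph on n vertices such that the multiplicity of the largest distance Laplacian eigenvalue ∂L_1 of G equals n−3. Let M be any 5×5 principal submatrix of the distance Laplacian matrix D^L(G). Then ∂L_1 is an eigenvalue of M with multiplicity at least two; moreover, for each index k ∈ {1,2,3,4,5} there exists a nonzero eigenvector z = (z_1,…,z_5) of M for the eigenvalue ∂L_1 such that z_k = 0 and z_1+z_2+z_3+z_4+z_5 = 0. -/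
open Matrix

/-- Let `G` be connected on `n ≥ 5` vertices with the multiplicity of the
largest distance Laplacian eigenvalue `∂ᴸ₁` equal to `n - 3`, and let `M` be any `5 × 5`
principal submatrix of `𝒟ᴸ(G)`. Then `∂ᴸ₁` is an eigenvalue of `M` of multiplicity at least
two, and for each index `k` there is a nonzero eigenvector `z` of `M` for `∂ᴸ₁` with `z k = 0`
and `∑ i, z i = 0`. -/
theorem principal_submatrix_eigenvector
    (n : ℕ) (hn : 5 ≤ n) (G : SimpleGraph (Fin n)) (hG : G.Connected)
    (hmult : eigMult (distLaplacian G) (lambdaMax (distLaplacian G)) = n - 3)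
    (f : Fin 5 → Fin n) (hf : Function.Injective f)
    (M : Matrix (Fin 5) (Fin 5) ℝ) (hM : M = (distLaplacian G).submatrix f f) :
    2 ≤ eigMult M (lambdaMax (distLaplacian G)) ∧
      ∀ k : Fin 5, ∃ z : Fin 5 → ℝ, z ≠ 0 ∧
        M.mulVec z = lambdaMax (distLaplacian G) • z ∧ z k = 0 ∧ ∑ i, z i = 0 := by
  classical
  set l := lambdaMax (distLaplacian G) with hl
  set D := distLaplacian G with hD
  set A : Matrix (Fin n) (Fin n) ℝ := D - l • 1 with hA
  have hNE : Nonempty (Fin n) := ⟨⟨0, by omega⟩⟩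
  -- D applied to a vector, written with distances
  have hDapply : ∀ (x : Fin n → ℝ) (i : Fin n),
      D.mulVec x i = ∑ k, (G.dist i k : ℝ) * (x i - x k) := by
    intro x i
    have h0 : D.mulVec x i = ∑ k, D i k * x k := by
      simp [Matrix.mulVec, dotProduct]
    have h2 : ∀ k ∈ Finset.univ.erase i, D i k * x k = -((G.dist i k : ℝ) * x k) := by
      intro k hk
      have hne : i ≠ k := (Finset.ne_of_mem_erase hk).symm
      simp [hD, distLaplacian, hne]
    have h3 : ∑ k ∈ Finset.univ.erase i, (G.dist i k : ℝ) * x k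
        = ∑ k, (G.dist i k : ℝ) * x k := by
      rw [← Finset.add_sum_erase _ (fun k => (G.dist i k : ℝ) * x k) (Finset.mem_univ i)]
      simp [SimpleGraph.dist_self]
    rw [h0, ← Finset.add_sum_erase _ _ (Finset.mem_univ i),
      Finset.sum_congr rfl h2, Finset.sum_neg_distrib, h3]
    have hDii : D i i = ∑ k, (G.dist i k : ℝ) := by simp [hD, distLaplacian]
    rw [hDii]
    simp only [mul_sub, Finset.sum_sub_distrib, ← Finset.sum_mul]
    ring
  -- the constant vector is killed by D
  have hD1 : D.mulVec (fun _ => (1 : ℝ)) = 0 := by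
    funext i; rw [hDapply]; simp
  -- lambdaMax is nonzero
  have hl0 : l ≠ 0 := by
    intro h0
    have hker : Module.finrank ℝ (LinearMap.ker D.mulVecLin) = n - 3 := by
      have h : Module.finrank ℝ (Module.End.eigenspace D.mulVecLin l) = n - 3 := hmult
      rwa [h0, Module.End.eigenspace_zero] at h
    have hle : LinearMap.ker D.mulVecLin ≤ Submodule.span ℝ {(fun _ => (1 : ℝ) : Fin n → ℝ)} := by
      intro x hx
      have hx' : D.mulVec x = 0 := hx
      obtain ⟨i₀, -, hmax⟩ := Finset.exists_max_image Finset.univ x Finset.univ_nonempty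
      have e1 : ∑ k, (G.dist i₀ k : ℝ) * (x i₀ - x k) = 0 := by
        rw [← hDapply x i₀, hx']; rfl
      have e2 : ∀ k ∈ Finset.univ, (0:ℝ) ≤ (G.dist i₀ k : ℝ) * (x i₀ - x k) := by
        intro k _
        exact mul_nonneg (Nat.cast_nonneg _) (sub_nonneg.2 (hmax k (Finset.mem_univ k)))
      have e3 := (Finset.sum_eq_zero_iff_of_nonneg e2).1 e1
      have hxc : ∀ k, x k = x i₀ := by
        intro k
        by_cases hk : k = i₀
        · rw [hk]
        · have hd : (0:ℝ) < (G.dist i₀ k : ℝ) := by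
            exact_mod_cast hG.pos_dist_of_ne (fun h => hk h.symm)
          have := e3 k (Finset.mem_univ k)
          rcases mul_eq_zero.1 this with h | h
          · exact absurd h (ne_of_gt hd)
          · linarith [sub_eq_zero.1 h]
      refine Submodule.mem_span_singleton.2 ⟨x i₀, ?_⟩
      funext k; simp [hxc k]
    have h1 : Module.finrank ℝ (LinearMap.ker D.mulVecLin)
        ≤ Module.finrank ℝ (Submodule.span ℝ {(fun _ => (1 : ℝ) : Fin n → ℝ)}) :=
      Submodule.finrank_mono hle
    have hone : (fun _ => (1:ℝ) : Fin n → ℝ) ≠ 0 := by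
      intro h; exact one_ne_zero (congrFun h (Classical.arbitrary _))
    rw [hker, finrank_span_singleton hone] at h1
    omega
  -- A is symmetric
  have hAsymm : ∀ i j, A i j = A j i := by
    intro i j
    by_cases h : i = j
    · rw [h]
    · simp only [hA, Matrix.sub_apply, Matrix.smul_apply, Matrix.one_apply, h, Ne.symm h,
        if_false, hD, distLaplacian, Matrix.of_apply]
      rw [SimpleGraph.dist_comm]
  -- kernel of A = eigenspace of D at l
  have hAlin : A.mulVecLin = D.mulVecLin - l • 1 := by
    apply LinearMap.ext; intro v
    simp [hA, Matrix.mulVecLin_apply, Matrix.sub_mulVec, Matrix.smul_mulVec,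
      Matrix.one_mulVec, LinearMap.sub_apply, LinearMap.smul_apply, Module.End.one_apply]
  have hkerA : LinearMap.ker A.mulVecLin = Module.End.eigenspace D.mulVecLin l := by
    rw [Module.End.eigenspace_def, hAlin]
  have hkerrank : Module.finrank ℝ (LinearMap.ker A.mulVecLin) = n - 3 := by
    rw [hkerA]; exact hmult
  have hrange : Module.finrank ℝ (LinearMap.range A.mulVecLin) = 3 := by
    have h := LinearMap.finrank_range_add_finrank_ker A.mulVecLin
    rw [hkerrank, Module.finrank_pi, Fintype.card_fin] at h
    omega
  -- constant vector in the range of A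
  have hA1 : A.mulVec (fun _ => (1:ℝ)) = (-l) • (fun _ => (1:ℝ)) := by
    rw [hA, Matrix.sub_mulVec, hD1, Matrix.smul_mulVec, Matrix.one_mulVec]
    funext i; simp
  have honemem : (fun _ => (1:ℝ) : Fin n → ℝ) ∈ LinearMap.range A.mulVecLin := by
    refine ⟨(-l)⁻¹ • (fun _ => (1:ℝ)), ?_⟩
    rw [Matrix.mulVecLin_apply, Matrix.mulVec_smul, hA1, smul_smul,
      inv_mul_cancel₀ (by simpa using hl0)]
    simp
  -- basis of the range
  let R : Submodule ℝ (Fin n → ℝ) := LinearMap.range A.mulVecLin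
  let b : Module.Basis (Fin 3) ℝ R := Module.finBasisOfFinrankEq ℝ R hrange
  -- key lemma
  have hkey : ∀ z : Fin 5 → ℝ,
      (∀ j : Fin 3, ∑ i, z i * (b j : Fin n → ℝ) (f i) = 0) →
      M.mulVec z = l • z ∧ ∑ i, z i = 0 := by
    intro z hz
    set gz : (Fin n → ℝ) →ₗ[ℝ] ℝ :=
      ∑ i : Fin 5, z i • (LinearMap.proj (f i) : (Fin n → ℝ) →ₗ[ℝ] ℝ) with hgzdef
    have hgz : ∀ v : Fin n → ℝ, gz v = ∑ i, z i * v (f i) := by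
      intro v; simp [hgzdef]
    have hcomp : gz.comp R.subtype = 0 := by
      apply b.ext; intro j
      simp only [LinearMap.comp_apply, Submodule.subtype_apply, LinearMap.zero_apply]
      rw [hgz]; exact hz j
    have hvanish : ∀ v ∈ R, gz v = 0 := by
      intro v hv
      have := DFunLike.congr_fun hcomp (⟨v, hv⟩ : R)
      simpa using this
    constructor
    · funext i
      have hvmem : A.mulVec (Pi.single (f i) (1:ℝ)) ∈ R := ⟨Pi.single (f i) 1, rfl⟩
      have h0 := hvanish _ hvmem
      rw [hgz] at h0
      have h1 : ∑ i', A (f i) (f i') * z i' = 0 := by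
        rw [← h0]
        refine Finset.sum_congr rfl fun i' _ => ?_
        simp only [Matrix.mulVec_single_one, Matrix.col_apply, Matrix.transpose_apply]
        rw [hAsymm (f i) (f i'), mul_comm]
      have hMA : ∀ i', M i i' = A (f i) (f i') + (if i = i' then l else 0) := by
        intro i'
        rw [hM, hA]
        simp only [Matrix.submatrix_apply, Matrix.sub_apply, Matrix.smul_apply,
          Matrix.one_apply, smul_eq_mul]
        by_cases h : i = i'
        · simp [h]
        · have : f i ≠ f i' := fun hc => h (hf hc)
          simp [h, this]
      have : M.mulVec z i = ∑ i', M i i' * z i' := by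
        simp [Matrix.mulVec, dotProduct]
      rw [this, Finset.sum_congr rfl (fun i' _ => by rw [hMA i', add_mul]),
        Finset.sum_add_distrib, h1, zero_add]
      simp [Finset.sum_ite_eq, Pi.smul_apply, smul_eq_mul, ite_mul]
    · have h0 := hvanish _ honemem
      rw [hgz] at h0
      simpa using h0
  -- the matrix of constraints
  let B : Matrix (Fin 3) (Fin 5) ℝ := Matrix.of fun j i => (b j : Fin n → ℝ) (f i)
  have hBker : ∀ z ∈ LinearMap.ker B.mulVecLin,
      ∀ j : Fin 3, ∑ i, z i * (b j : Fin n → ℝ) (f i) = 0 := by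
    intro z hz j
    have hz' : B.mulVec z = 0 := hz
    have h1 : ∑ i, (b j : Fin n → ℝ) (f i) * z i = 0 := by
      have h := congrFun hz' j
      simpa [Matrix.mulVec, dotProduct, B] using h
    rw [show ∑ i, z i * (b j : Fin n → ℝ) (f i) = ∑ i, (b j : Fin n → ℝ) (f i) * z i from
      Finset.sum_congr rfl fun i _ => mul_comm _ _]
    exact h1
  constructor
  · -- multiplicity at least 2
    have hle : LinearMap.ker B.mulVecLin ≤ Module.End.eigenspace M.mulVecLin l := by
      intro z hz
      rw [Module.End.mem_eigenspace_iff]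
      exact (hkey z (hBker z hz)).1
    have h1 : Module.finrank ℝ (LinearMap.ker B.mulVecLin)
        ≤ eigMult M l := Submodule.finrank_mono hle
    have h2 := LinearMap.finrank_range_add_finrank_ker B.mulVecLin
    have h3 : Module.finrank ℝ (LinearMap.range B.mulVecLin) ≤ 3 := by
      have := Submodule.finrank_le (LinearMap.range B.mulVecLin)
      rwa [Module.finrank_pi, Fintype.card_fin] at this
    rw [Module.finrank_pi, Fintype.card_fin] at h2
    omega
  · intro k
    let L : (Fin 5 → ℝ) →ₗ[ℝ] (Fin 3 → ℝ) × ℝ :=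
      B.mulVecLin.prod (LinearMap.proj k)
    have h2 := LinearMap.finrank_range_add_finrank_ker L
    have h3 : Module.finrank ℝ (LinearMap.range L) ≤ 4 := by
      have := Submodule.finrank_le (LinearMap.range L)
      rwa [Module.finrank_prod, Module.finrank_pi, Fintype.card_fin,
        Module.finrank_self] at this
    rw [Module.finrank_pi, Fintype.card_fin] at h2
    have hkpos : 0 < Module.finrank ℝ (LinearMap.ker L) := by omega
    have hne : LinearMap.ker L ≠ ⊥ := by
      intro hbot
      rw [hbot, finrank_bot] at hkpos
      exact lt_irrefl 0 hkpos
    obtain ⟨z, hzmem, hz0⟩ := Submodule.exists_mem_ne_zero_of_ne_bot hne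
    have hLz : L z = 0 := hzmem
    have hB : B.mulVec z = 0 := congrArg Prod.fst hLz
    have hzk : z k = 0 := congrArg Prod.snd hLz
    have hkz := hkey z (hBker z hB)
    exact ⟨z, hz0, by rw [hkz.1, hl], hzk, hkz.2⟩
end

section
/- Let G be a connected P_5-free simple graph on n ≥ 5 vertices with diameter 3. Then G contains, as an induced subgraph, at least one of the following five graphs I_1,…,I_5 on vertex set {v_1,v_2,v_3,v_4,u}: each I_i contains the induced path v_1v_2v_3v_4, and the neighborhood of u within {v_1,v_2,v_3,v_4} is {v_2} in I_1, {v_1,v_2} in I_2, {v_1,v_3} in I_3, {v_2,v_3} in I_4, and {v_1,v_2,v_3} in I_5. -/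
set_option maxHeartbeats 1600000


/-- The path `v₁v₂v₃v₄` on the vertices `0, 1, 2, 3` of `Fin 5`. -/
def pathEdges : Set (Sym2 (Fin 5)) := {s(0, 1), s(1, 2), s(2, 3)}

/-- `I₁`: the path `v₁v₂v₃v₄` plus a fifth vertex `u` adjacent exactly to `v₂`. -/
def Igraph1 : SimpleGraph (Fin 5) := SimpleGraph.fromEdgeSet (pathEdges ∪ {s(4, 1)})

/-- `I₂`: the path `v₁v₂v₃v₄` plus a fifth vertex `u` adjacent exactly to `v₁, v₂`. -/
def Igraph2 : SimpleGraph (Fin 5) := SimpleGraph.fromEdgeSet (pathEdges ∪ {s(4, 0), s(4, 1)})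

/-- `I₃`: the path `v₁v₂v₃v₄` plus a fifth vertex `u` adjacent exactly to `v₁, v₃`. -/
def Igraph3 : SimpleGraph (Fin 5) := SimpleGraph.fromEdgeSet (pathEdges ∪ {s(4, 0), s(4, 2)})

/-- `I₄`: the path `v₁v₂v₃v₄` plus a fifth vertex `u` adjacent exactly to `v₂, v₃`. -/
def Igraph4 : SimpleGraph (Fin 5) := SimpleGraph.fromEdgeSet (pathEdges ∪ {s(4, 1), s(4, 2)})

/-- `I₅`: the path `v₁v₂v₃v₄` plus a fifth vertex `u` adjacent exactly to `v₁, v₂, v₃`. -/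
def Igraph5 : SimpleGraph (Fin 5) :=
  SimpleGraph.fromEdgeSet (pathEdges ∪ {s(4, 0), s(4, 1), s(4, 2)})

section Aux

variable {n : ℕ} {G : SimpleGraph (Fin n)} {v1 v2 v3 v4 u : Fin n}

lemma myEmbedI1
    (h12 : G.Adj v1 v2) (h23 : G.Adj v2 v3) (h34 : G.Adj v3 v4)
    (h13 : ¬G.Adj v1 v3) (h14 : ¬G.Adj v1 v4) (h24 : ¬G.Adj v2 v4)
    (hu1 : ¬G.Adj u v1) (hu2 : G.Adj u v2) (hu3 : ¬G.Adj u v3) (hu4 : ¬G.Adj u v4)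
    (n1 : u ≠ v1) (n3 : u ≠ v3) (n4 : u ≠ v4) :
    Nonempty (Igraph1 ↪g G) := by
  have h21 := h23.symm; have h32 := h34.symm; have h10 := h12.symm
  have h31 : ¬G.Adj v3 v1 := fun h => h13 h.symm
  have h41 : ¬G.Adj v4 v1 := fun h => h14 h.symm
  have h42 : ¬G.Adj v4 v2 := fun h => h24 h.symm
  have hu1' : ¬G.Adj v1 u := fun h => hu1 h.symm
  have hu2' := hu2.symm
  have hu3' : ¬G.Adj v3 u := fun h => hu3 h.symm
  have hu4' : ¬G.Adj v4 u := fun h => hu4 h.symm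
  have e12 := h12.ne; have e23 := h23.ne; have e34 := h34.ne
  have e13 : v1 ≠ v3 := fun h => h14 (h ▸ h34)
  have e24 : v2 ≠ v4 := fun h => h14 (h ▸ h12)
  have e14 : v1 ≠ v4 := fun h => h13 (h ▸ h34.symm)
  have n2 := hu2.ne
  refine ⟨⟨![v1, v2, v3, v4, u], ?_⟩, ?_⟩
  · intro i j h
    fin_cases i <;> fin_cases j <;> simp_all
  · intro i j
    change G.Adj (![v1, v2, v3, v4, u] i) (![v1, v2, v3, v4, u] j) ↔ _
    fin_cases i <;> fin_cases j <;>
      simp_all [Igraph1, pathEdges, SimpleGraph.fromEdgeSet_adj, Sym2.eq_iff] <;> decide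

lemma myEmbedI2
    (h12 : G.Adj v1 v2) (h23 : G.Adj v2 v3) (h34 : G.Adj v3 v4)
    (h13 : ¬G.Adj v1 v3) (h14 : ¬G.Adj v1 v4) (h24 : ¬G.Adj v2 v4)
    (hu1 : G.Adj u v1) (hu2 : G.Adj u v2) (hu3 : ¬G.Adj u v3) (hu4 : ¬G.Adj u v4)
    (n3 : u ≠ v3) (n4 : u ≠ v4) :
    Nonempty (Igraph2 ↪g G) := by
  have h21 := h23.symm; have h32 := h34.symm; have h10 := h12.symm
  have h31 : ¬G.Adj v3 v1 := fun h => h13 h.symm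
  have h41 : ¬G.Adj v4 v1 := fun h => h14 h.symm
  have h42 : ¬G.Adj v4 v2 := fun h => h24 h.symm
  have hu1' := hu1.symm
  have hu2' := hu2.symm
  have hu3' : ¬G.Adj v3 u := fun h => hu3 h.symm
  have hu4' : ¬G.Adj v4 u := fun h => hu4 h.symm
  have e12 := h12.ne; have e23 := h23.ne; have e34 := h34.ne
  have e13 : v1 ≠ v3 := fun h => h14 (h ▸ h34)
  have e24 : v2 ≠ v4 := fun h => h14 (h ▸ h12)
  have e14 : v1 ≠ v4 := fun h => h13 (h ▸ h34.symm)
  have n1 := hu1.ne; have n2 := hu2.ne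
  refine ⟨⟨![v1, v2, v3, v4, u], ?_⟩, ?_⟩
  · intro i j h
    fin_cases i <;> fin_cases j <;> simp_all
  · intro i j
    change G.Adj (![v1, v2, v3, v4, u] i) (![v1, v2, v3, v4, u] j) ↔ _
    fin_cases i <;> fin_cases j <;>
      simp_all [Igraph2, pathEdges, SimpleGraph.fromEdgeSet_adj, Sym2.eq_iff] <;> decide

lemma myEmbedI3
    (h12 : G.Adj v1 v2) (h23 : G.Adj v2 v3) (h34 : G.Adj v3 v4)
    (h13 : ¬G.Adj v1 v3) (h14 : ¬G.Adj v1 v4) (h24 : ¬G.Adj v2 v4)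
    (hu1 : G.Adj u v1) (hu2 : ¬G.Adj u v2) (hu3 : G.Adj u v3) (hu4 : ¬G.Adj u v4)
    (n2 : u ≠ v2) (n4 : u ≠ v4) :
    Nonempty (Igraph3 ↪g G) := by
  have h21 := h23.symm; have h32 := h34.symm; have h10 := h12.symm
  have h31 : ¬G.Adj v3 v1 := fun h => h13 h.symm
  have h41 : ¬G.Adj v4 v1 := fun h => h14 h.symm
  have h42 : ¬G.Adj v4 v2 := fun h => h24 h.symm
  have hu1' := hu1.symm
  have hu2' : ¬G.Adj v2 u := fun h => hu2 h.symm
  have hu3' := hu3.symm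
  have hu4' : ¬G.Adj v4 u := fun h => hu4 h.symm
  have e12 := h12.ne; have e23 := h23.ne; have e34 := h34.ne
  have e13 : v1 ≠ v3 := fun h => h14 (h ▸ h34)
  have e24 : v2 ≠ v4 := fun h => h14 (h ▸ h12)
  have e14 : v1 ≠ v4 := fun h => h13 (h ▸ h34.symm)
  have n1 := hu1.ne; have n3 := hu3.ne
  refine ⟨⟨![v1, v2, v3, v4, u], ?_⟩, ?_⟩
  · intro i j h
    fin_cases i <;> fin_cases j <;> simp_all
  · intro i j
    change G.Adj (![v1, v2, v3, v4, u] i) (![v1, v2, v3, v4, u] j) ↔ _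
    fin_cases i <;> fin_cases j <;>
      simp_all [Igraph3, pathEdges, SimpleGraph.fromEdgeSet_adj, Sym2.eq_iff] <;> decide

lemma myEmbedI4
    (h12 : G.Adj v1 v2) (h23 : G.Adj v2 v3) (h34 : G.Adj v3 v4)
    (h13 : ¬G.Adj v1 v3) (h14 : ¬G.Adj v1 v4) (h24 : ¬G.Adj v2 v4)
    (hu1 : ¬G.Adj u v1) (hu2 : G.Adj u v2) (hu3 : G.Adj u v3) (hu4 : ¬G.Adj u v4)
    (n1 : u ≠ v1) (n4 : u ≠ v4) :
    Nonempty (Igraph4 ↪g G) := by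
  have h21 := h23.symm; have h32 := h34.symm; have h10 := h12.symm
  have h31 : ¬G.Adj v3 v1 := fun h => h13 h.symm
  have h41 : ¬G.Adj v4 v1 := fun h => h14 h.symm
  have h42 : ¬G.Adj v4 v2 := fun h => h24 h.symm
  have hu1' : ¬G.Adj v1 u := fun h => hu1 h.symm
  have hu2' := hu2.symm
  have hu3' := hu3.symm
  have hu4' : ¬G.Adj v4 u := fun h => hu4 h.symm
  have e12 := h12.ne; have e23 := h23.ne; have e34 := h34.ne
  have e13 : v1 ≠ v3 := fun h => h14 (h ▸ h34)
  have e24 : v2 ≠ v4 := fun h => h14 (h ▸ h12)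
  have e14 : v1 ≠ v4 := fun h => h13 (h ▸ h34.symm)
  have n2 := hu2.ne; have n3 := hu3.ne
  refine ⟨⟨![v1, v2, v3, v4, u], ?_⟩, ?_⟩
  · intro i j h
    fin_cases i <;> fin_cases j <;> simp_all
  · intro i j
    change G.Adj (![v1, v2, v3, v4, u] i) (![v1, v2, v3, v4, u] j) ↔ _
    fin_cases i <;> fin_cases j <;>
      simp_all [Igraph4, pathEdges, SimpleGraph.fromEdgeSet_adj, Sym2.eq_iff] <;> decide

lemma myEmbedI5
    (h12 : G.Adj v1 v2) (h23 : G.Adj v2 v3) (h34 : G.Adj v3 v4)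
    (h13 : ¬G.Adj v1 v3) (h14 : ¬G.Adj v1 v4) (h24 : ¬G.Adj v2 v4)
    (hu1 : G.Adj u v1) (hu2 : G.Adj u v2) (hu3 : G.Adj u v3) (hu4 : ¬G.Adj u v4)
    (n4 : u ≠ v4) :
    Nonempty (Igraph5 ↪g G) := by
  have h21 := h23.symm; have h32 := h34.symm; have h10 := h12.symm
  have h31 : ¬G.Adj v3 v1 := fun h => h13 h.symm
  have h41 : ¬G.Adj v4 v1 := fun h => h14 h.symm
  have h42 : ¬G.Adj v4 v2 := fun h => h24 h.symm
  have hu1' := hu1.symm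
  have hu2' := hu2.symm
  have hu3' := hu3.symm
  have hu4' : ¬G.Adj v4 u := fun h => hu4 h.symm
  have e12 := h12.ne; have e23 := h23.ne; have e34 := h34.ne
  have e13 : v1 ≠ v3 := fun h => h14 (h ▸ h34)
  have e24 : v2 ≠ v4 := fun h => h14 (h ▸ h12)
  have e14 : v1 ≠ v4 := fun h => h13 (h ▸ h34.symm)
  have n1 := hu1.ne; have n2 := hu2.ne; have n3 := hu3.ne
  refine ⟨⟨![v1, v2, v3, v4, u], ?_⟩, ?_⟩
  · intro i j h
    fin_cases i <;> fin_cases j <;> simp_all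
  · intro i j
    change G.Adj (![v1, v2, v3, v4, u] i) (![v1, v2, v3, v4, u] j) ↔ _
    fin_cases i <;> fin_cases j <;>
      simp_all [Igraph5, pathEdges, SimpleGraph.fromEdgeSet_adj, Sym2.eq_iff] <;> decide

lemma myEmbedP5 {w1 w2 w3 w4 w5 : Fin n}
    (h12 : G.Adj w1 w2) (h23 : G.Adj w2 w3) (h34 : G.Adj w3 w4) (h45 : G.Adj w4 w5)
    (h13 : ¬G.Adj w1 w3) (h14 : ¬G.Adj w1 w4) (h15 : ¬G.Adj w1 w5)
    (h24 : ¬G.Adj w2 w4) (h25 : ¬G.Adj w2 w5) (h35 : ¬G.Adj w3 w5) :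
    Nonempty (SimpleGraph.pathGraph 5 ↪g G) := by
  have h21 := h12.symm; have h32 := h23.symm; have h43 := h34.symm; have h54 := h45.symm
  have h31 : ¬G.Adj w3 w1 := fun h => h13 h.symm
  have h41 : ¬G.Adj w4 w1 := fun h => h14 h.symm
  have h51 : ¬G.Adj w5 w1 := fun h => h15 h.symm
  have h42 : ¬G.Adj w4 w2 := fun h => h24 h.symm
  have h52 : ¬G.Adj w5 w2 := fun h => h25 h.symm
  have h53 : ¬G.Adj w5 w3 := fun h => h35 h.symm
  have e12 := h12.ne; have e23 := h23.ne; have e34 := h34.ne; have e45 := h45.ne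
  have e13 : w1 ≠ w3 := fun h => h14 (h ▸ h34)
  have e14 : w1 ≠ w4 := fun h => h15 (h ▸ h45)
  have e15 : w1 ≠ w5 := fun h => h14 (h ▸ h45.symm)
  have e24 : w2 ≠ w4 := fun h => h25 (h ▸ h45)
  have e25 : w2 ≠ w5 := fun h => h24 (h ▸ h45.symm)
  have e35 : w3 ≠ w5 := fun h => h25 (h ▸ h23)
  refine ⟨⟨![w1, w2, w3, w4, w5], ?_⟩, ?_⟩
  · intro i j h
    fin_cases i <;> fin_cases j <;> simp_all
  · intro i j
    change G.Adj (![w1, w2, w3, w4, w5] i) (![w1, w2, w3, w4, w5] j) ↔ _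
    fin_cases i <;> fin_cases j <;>
      simp_all [SimpleGraph.pathGraph_adj] <;> decide

lemma myWalk3 {V : Type*} {G : SimpleGraph V} {x y : V} (p : G.Walk x y) (hp : p.length = 3) :
    ∃ a b, G.Adj x a ∧ G.Adj a b ∧ G.Adj b y := by
  cases p with
  | nil => simp at hp
  | cons h q =>
    cases q with
    | nil => simp at hp
    | cons h2 r =>
      cases r with
      | nil => simp at hp
      | cons h3 s =>
        cases s with
        | nil => exact ⟨_, _, h, h2, h3⟩
        | cons h4 t => simp [SimpleGraph.Walk.length_cons] at hp

lemma myBoundary {V : Type*} {G : SimpleGraph V} (S : Set V) :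
    ∀ {w t : V}, G.Walk w t → w ∉ S → t ∈ S → ∃ u v, u ∉ S ∧ v ∈ S ∧ G.Adj u v := by
  intro w t p
  induction p with
  | nil => intro hw ht; exact absurd ht hw
  | @cons a b c h q ih =>
    intro hw ht
    by_cases hb : b ∈ S
    · exact ⟨a, b, hw, hb, h⟩
    · exact ih hb ht

end Aux

/-- Let `G` be a connected `P₅`-free graph on `n ≥ 5` vertices with
diameter `3`. Then at least one of `I₁, …, I₅` is an induced subgraph of `G`. -/
theorem exists_induced_Igraph_of_P5_free_diam_three
    (n : ℕ) (hn : 5 ≤ n) (G : SimpleGraph (Fin n)) (hG : G.Connected)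
    (hP5 : IsEmpty (SimpleGraph.pathGraph 5 ↪g G)) (hd : G.diam = 3) :
    Nonempty (Igraph1 ↪g G) ∨ Nonempty (Igraph2 ↪g G) ∨ Nonempty (Igraph3 ↪g G) ∨
      Nonempty (Igraph4 ↪g G) ∨ Nonempty (Igraph5 ↪g G) := by
  have hne : Nonempty (Fin n) := ⟨⟨0, by omega⟩⟩
  obtain ⟨x, y, hxy3⟩ := G.exists_dist_eq_diam
  rw [hd] at hxy3
  obtain ⟨p, hp⟩ := hG.exists_walk_length_eq_dist x y
  rw [hxy3] at hp
  obtain ⟨a, b, hxa, hab, hby⟩ := myWalk3 p hp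
  -- non-adjacencies along the geodesic
  have hxb : ¬G.Adj x b := by
    intro h
    have := SimpleGraph.dist_le (SimpleGraph.Walk.cons h (SimpleGraph.Walk.cons hby SimpleGraph.Walk.nil))
    rw [hxy3] at this; simp at this
  have hxy : ¬G.Adj x y := by
    intro h
    have := SimpleGraph.dist_le (SimpleGraph.Walk.cons h SimpleGraph.Walk.nil)
    rw [hxy3] at this; simp at this
  have hay : ¬G.Adj a y := by
    intro h
    have := SimpleGraph.dist_le (SimpleGraph.Walk.cons hxa (SimpleGraph.Walk.cons h SimpleGraph.Walk.nil))
    rw [hxy3] at this; simp at this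
  -- a vertex outside the path
  have hcard : ({x, a, b, y} : Finset (Fin n)).card ≤ 4 := by
    refine (Finset.card_insert_le _ _).trans (Nat.add_le_add_right ?_ 1)
    refine (Finset.card_insert_le _ _).trans (Nat.add_le_add_right ?_ 1)
    refine (Finset.card_insert_le _ _).trans (Nat.add_le_add_right ?_ 1)
    simp
  have hw : ∃ w, w ∉ ({x, a, b, y} : Set (Fin n)) := by
    by_contra hAll
    push_neg at hAll
    have hsub : (Finset.univ : Finset (Fin n)) ⊆ ({x, a, b, y} : Finset (Fin n)) := by
      intro w _
      have := hAll w
      simp only [Set.mem_insert_iff, Set.mem_singleton_iff] at this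
      simp only [Finset.mem_insert, Finset.mem_singleton]
      exact this
    have := (Finset.card_le_card hsub).trans hcard
    simp [Finset.card_univ] at this
    omega
  obtain ⟨w, hwS⟩ := hw
  obtain ⟨pw⟩ := hG.preconnected w x
  obtain ⟨u, v, huS, hvS, huv⟩ := myBoundary ({x, a, b, y} : Set (Fin n)) pw hwS (by simp)
  simp only [Set.mem_insert_iff, Set.mem_singleton_iff] at huS hvS
  push_neg at huS
  obtain ⟨nux, nua, nub, nuy⟩ := huS
  have noA14 : ¬(G.Adj u x ∧ G.Adj u y) := by
    rintro ⟨h1, h4⟩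
    have := SimpleGraph.dist_le (SimpleGraph.Walk.cons h1.symm (SimpleGraph.Walk.cons h4 SimpleGraph.Walk.nil))
    rw [hxy3] at this; simp at this
  -- reversed-path nonadjacencies
  have hya : ¬G.Adj y a := fun h => hay h.symm
  have hyx : ¬G.Adj y x := fun h => hxy h.symm
  have hbx : ¬G.Adj b x := fun h => hxb h.symm
  by_cases hA1 : G.Adj u x <;> by_cases hA2 : G.Adj u a <;>
    by_cases hA3 : G.Adj u b <;> by_cases hA4 : G.Adj u y
  · exact absurd ⟨hA1, hA4⟩ noA14
  · -- TTTF : I5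
    exact Or.inr (Or.inr (Or.inr (Or.inr
      (myEmbedI5 hxa hab hby hxb hxy hay hA1 hA2 hA3 hA4 nuy))))
  · exact absurd ⟨hA1, hA4⟩ noA14
  · -- TTFF : I2
    exact Or.inr (Or.inl (myEmbedI2 hxa hab hby hxb hxy hay hA1 hA2 hA3 hA4 nub nuy))
  · exact absurd ⟨hA1, hA4⟩ noA14
  · -- TFTF : I3
    exact Or.inr (Or.inr (Or.inl (myEmbedI3 hxa hab hby hxb hxy hay hA1 hA2 hA3 hA4 nua nuy)))
  · exact absurd ⟨hA1, hA4⟩ noA14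
  · -- TFFF : P5  u x a b y
    exact ((myEmbedP5 hA1 hxa hab hby hA2 hA3 hA4 hxb hxy hay).elim
      fun e => (hP5.false e).elim)
  · -- FTTT : I5 reversed (y, b, a, x)
    exact Or.inr (Or.inr (Or.inr (Or.inr
      (myEmbedI5 hby.symm hab.symm hxa.symm hya hyx hbx hA4 hA3 hA2 hA1 nux))))
  · -- FTTF : I4
    exact Or.inr (Or.inr (Or.inr (Or.inl
      (myEmbedI4 hxa hab hby hxb hxy hay hA1 hA2 hA3 hA4 nux nuy))))
  · -- FTFT : I3 reversed
    exact Or.inr (Or.inr (Or.inl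
      (myEmbedI3 hby.symm hab.symm hxa.symm hya hyx hbx hA4 hA3 hA2 hA1 nub nux)))
  · -- FTFF : I1
    exact Or.inl (myEmbedI1 hxa hab hby hxb hxy hay hA1 hA2 hA3 hA4 nux nub nuy)
  · -- FFTT : I2 reversed
    exact Or.inr (Or.inl
      (myEmbedI2 hby.symm hab.symm hxa.symm hya hyx hbx hA4 hA3 hA2 hA1 nua nux))
  · -- FFTF : I1 reversed
    exact Or.inl (myEmbedI1 hby.symm hab.symm hxa.symm hya hyx hbx hA4 hA3 hA2 hA1 nuy nua nux)
  · -- FFFT : P5 reversed  u y b a x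
    exact ((myEmbedP5 hA4 hby.symm hab.symm hxa.symm hA3 hA2 hA1 hya hyx hbx).elim
      fun e => (hP5.false e).elim)
  · -- FFFF : contradiction, u is adjacent to some path vertex
    rcases hvS with rfl | rfl | rfl | rfl
    · exact absurd huv hA1
    · exact absurd huv hA2
    · exact absurd huv hA3
    · exact absurd huv hA4
end

section
/- Let G be a connected P_5-free simple graph on n ≥ 5 vertices with diameter 3, and suppose that none of the graphs I_1, I_2, I_4, I_5 is an induced subgraph of G. Then G is isomorphic to J(a,b) for some positive integers a, b with a + b + 2 = n. -/
/-- The graph `J(a,b)`: obtained from the disjoint union of the stars `K_{1,a}` and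
`K_{1,b}` (each realised as a complete bipartite graph with centre `Unit`) by joining
every pendant vertex of `K_{1,a}` with every pendant vertex of `K_{1,b}`. -/
def Jgraph (a b : ℕ) : SimpleGraph ((Unit ⊕ Fin a) ⊕ (Unit ⊕ Fin b)) where
  Adj u v :=
    match u, v with
    | Sum.inl x, Sum.inl y => (completeBipartiteGraph Unit (Fin a)).Adj x y
    | Sum.inr x, Sum.inr y => (completeBipartiteGraph Unit (Fin b)).Adj x y
    | Sum.inl x, Sum.inr y => x.isRight ∧ y.isRight
    | Sum.inr x, Sum.inl y => x.isRight ∧ y.isRight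
  symm := by
    constructor
    rintro (x | x) (y | y) h
    · exact (completeBipartiteGraph Unit (Fin a)).symm.symm _ _ h
    · exact ⟨h.2, h.1⟩
    · exact ⟨h.2, h.1⟩
    · exact (completeBipartiteGraph Unit (Fin b)).symm.symm _ _ h
  loopless := by
    constructor
    rintro (x | x) h
    · exact (completeBipartiteGraph Unit (Fin a)).loopless.irrefl x h
    · exact (completeBipartiteGraph Unit (Fin b)).loopless.irrefl x h


section
variable {V : Type*} {G : SimpleGraph V}

def embed_of_maps {W : Type*} {H : SimpleGraph W} (f : W → V)
    (hinj : Function.Injective f)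
    (hmap : ∀ i j, H.Adj i j → G.Adj (f i) (f j))
    (hmap' : ∀ i j, i ≠ j → ¬H.Adj i j → ¬G.Adj (f i) (f j)) : H ↪g G where
  toFun := f
  inj' := hinj
  map_rel_iff' := by
    intro i j
    constructor
    · intro hGa
      by_contra hH
      exact hmap' i j (fun h => G.loopless.irrefl _ (h ▸ hGa)) hH hGa
    · exact hmap i j

lemma killP5 (h0 : IsEmpty (SimpleGraph.pathGraph 5 ↪g G)) (a b c d e : V)
    (hab : G.Adj a b) (hbc : G.Adj b c) (hcd : G.Adj c d) (hde : G.Adj d e)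
    (hac : ¬G.Adj a c) (had : ¬G.Adj a d) (hae : ¬G.Adj a e)
    (hbd : ¬G.Adj b d) (hbe : ¬G.Adj b e) (hce : ¬G.Adj c e)
    (nac : a ≠ c) (nad : a ≠ d) (nae : a ≠ e)
    (nbd : b ≠ d) (nbe : b ≠ e) (nce : c ≠ e) : False := by
  apply h0.false
  apply embed_of_maps ![a, b, c, d, e]
  · intro i j hf
    fin_cases i <;> fin_cases j <;>
      simp_all [hab.ne, hbc.ne, hcd.ne, hde.ne, hab.ne', hbc.ne', hcd.ne', hde.ne']
  · intro i j hadj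
    simp only [SimpleGraph.pathGraph_adj] at hadj
    fin_cases i <;> fin_cases j <;> simp_all <;>
      first
      | exact hab | exact hbc | exact hcd | exact hde
      | exact hab.symm | exact hbc.symm | exact hcd.symm | exact hde.symm
  · intro i j hne hadj
    simp only [SimpleGraph.pathGraph_adj] at hadj
    fin_cases i <;> fin_cases j <;> simp_all <;>
      first
      | exact hac | exact had | exact hae | exact hbd | exact hbe | exact hce
      | exact fun h => hac h.symm | exact fun h => had h.symm | exact fun h => hae h.symm
      | exact fun h => hbd h.symm | exact fun h => hbe h.symm | exact fun h => hce h.symm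

lemma kill1 (h1 : IsEmpty (Igraph1 ↪g G)) (a b c d e : V)
    (hab : G.Adj a b) (hbc : G.Adj b c) (hcd : G.Adj c d) (heb : G.Adj e b)
    (hac : ¬G.Adj a c) (had : ¬G.Adj a d) (hae : ¬G.Adj a e)
    (hbd : ¬G.Adj b d) (hce : ¬G.Adj c e) (hde : ¬G.Adj d e)
    (nac : a ≠ c) (nad : a ≠ d) (nae : a ≠ e)
    (nbd : b ≠ d) (nce : c ≠ e) (nde : d ≠ e) : False := by
  apply h1.false
  apply embed_of_maps ![a, b, c, d, e]
  · intro i j hf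
    fin_cases i <;> fin_cases j <;>
      simp_all [hab.ne, hbc.ne, hcd.ne, heb.ne, hab.ne', hbc.ne', hcd.ne', heb.ne']
  · intro i j hadj
    simp only [Igraph1, pathEdges, SimpleGraph.fromEdgeSet_adj, Set.mem_union,
      Set.mem_insert_iff, Set.mem_singleton_iff, Sym2.eq_iff] at hadj
    fin_cases i <;> fin_cases j <;> simp_all <;>
      first
      | exact hab | exact hbc | exact hcd | exact heb
      | exact hab.symm | exact hbc.symm | exact hcd.symm | exact heb.symm
  · intro i j hne hadj
    simp only [Igraph1, pathEdges, SimpleGraph.fromEdgeSet_adj, Set.mem_union,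
      Set.mem_insert_iff, Set.mem_singleton_iff, Sym2.eq_iff] at hadj
    fin_cases i <;> fin_cases j <;> simp_all <;>
      first
      | exact hac | exact had | exact hae | exact hbd | exact hce | exact hde
      | exact fun h => hac h.symm | exact fun h => had h.symm | exact fun h => hae h.symm
      | exact fun h => hbd h.symm | exact fun h => hce h.symm | exact fun h => hde h.symm

lemma kill2 (h2 : IsEmpty (Igraph2 ↪g G)) (a b c d e : V)
    (hab : G.Adj a b) (hbc : G.Adj b c) (hcd : G.Adj c d)
    (hea : G.Adj e a) (heb : G.Adj e b)
    (hac : ¬G.Adj a c) (had : ¬G.Adj a d)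
    (hbd : ¬G.Adj b d) (hce : ¬G.Adj c e) (hde : ¬G.Adj d e)
    (nac : a ≠ c) (nad : a ≠ d)
    (nbd : b ≠ d) (nce : c ≠ e) (nde : d ≠ e) : False := by
  apply h2.false
  apply embed_of_maps ![a, b, c, d, e]
  · intro i j hf
    fin_cases i <;> fin_cases j <;>
      simp_all [hab.ne, hbc.ne, hcd.ne, hea.ne, heb.ne,
        hab.ne', hbc.ne', hcd.ne', hea.ne', heb.ne']
  · intro i j hadj
    simp only [Igraph2, pathEdges, SimpleGraph.fromEdgeSet_adj, Set.mem_union,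
      Set.mem_insert_iff, Set.mem_singleton_iff, Sym2.eq_iff] at hadj
    fin_cases i <;> fin_cases j <;> simp_all <;>
      first
      | exact hab | exact hbc | exact hcd | exact hea | exact heb
      | exact hab.symm | exact hbc.symm | exact hcd.symm | exact hea.symm | exact heb.symm
  · intro i j hne hadj
    simp only [Igraph2, pathEdges, SimpleGraph.fromEdgeSet_adj, Set.mem_union,
      Set.mem_insert_iff, Set.mem_singleton_iff, Sym2.eq_iff] at hadj
    fin_cases i <;> fin_cases j <;> simp_all <;>
      first
      | exact hac | exact had | exact hbd | exact hce | exact hde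
      | exact fun h => hac h.symm | exact fun h => had h.symm
      | exact fun h => hbd h.symm | exact fun h => hce h.symm | exact fun h => hde h.symm

lemma kill4 (h4 : IsEmpty (Igraph4 ↪g G)) (a b c d e : V)
    (hab : G.Adj a b) (hbc : G.Adj b c) (hcd : G.Adj c d)
    (heb : G.Adj e b) (hec : G.Adj e c)
    (hac : ¬G.Adj a c) (had : ¬G.Adj a d) (hae : ¬G.Adj a e)
    (hbd : ¬G.Adj b d) (hde : ¬G.Adj d e)
    (nac : a ≠ c) (nad : a ≠ d) (nae : a ≠ e)
    (nbd : b ≠ d) (nde : d ≠ e) : False := by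
  apply h4.false
  apply embed_of_maps ![a, b, c, d, e]
  · intro i j hf
    fin_cases i <;> fin_cases j <;>
      simp_all [hab.ne, hbc.ne, hcd.ne, heb.ne, hec.ne,
        hab.ne', hbc.ne', hcd.ne', heb.ne', hec.ne']
  · intro i j hadj
    simp only [Igraph4, pathEdges, SimpleGraph.fromEdgeSet_adj, Set.mem_union,
      Set.mem_insert_iff, Set.mem_singleton_iff, Sym2.eq_iff] at hadj
    fin_cases i <;> fin_cases j <;> simp_all <;>
      first
      | exact hab | exact hbc | exact hcd | exact heb | exact hec
      | exact hab.symm | exact hbc.symm | exact hcd.symm | exact heb.symm | exact hec.symm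
  · intro i j hne hadj
    simp only [Igraph4, pathEdges, SimpleGraph.fromEdgeSet_adj, Set.mem_union,
      Set.mem_insert_iff, Set.mem_singleton_iff, Sym2.eq_iff] at hadj
    fin_cases i <;> fin_cases j <;> simp_all <;>
      first
      | exact hac | exact had | exact hae | exact hbd | exact hde
      | exact fun h => hac h.symm | exact fun h => had h.symm | exact fun h => hae h.symm
      | exact fun h => hbd h.symm | exact fun h => hde h.symm

lemma kill5 (h5 : IsEmpty (Igraph5 ↪g G)) (a b c d e : V)
    (hab : G.Adj a b) (hbc : G.Adj b c) (hcd : G.Adj c d)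
    (hea : G.Adj e a) (heb : G.Adj e b) (hec : G.Adj e c)
    (hac : ¬G.Adj a c) (had : ¬G.Adj a d)
    (hbd : ¬G.Adj b d) (hde : ¬G.Adj d e)
    (nac : a ≠ c) (nad : a ≠ d)
    (nbd : b ≠ d) (nde : d ≠ e) : False := by
  apply h5.false
  apply embed_of_maps ![a, b, c, d, e]
  · intro i j hf
    fin_cases i <;> fin_cases j <;>
      simp_all [hab.ne, hbc.ne, hcd.ne, hea.ne, heb.ne, hec.ne,
        hab.ne', hbc.ne', hcd.ne', hea.ne', heb.ne', hec.ne']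
  · intro i j hadj
    simp only [Igraph5, pathEdges, SimpleGraph.fromEdgeSet_adj, Set.mem_union,
      Set.mem_insert_iff, Set.mem_singleton_iff, Sym2.eq_iff] at hadj
    fin_cases i <;> fin_cases j <;> simp_all <;>
      first
      | exact hab | exact hbc | exact hcd | exact hea | exact heb | exact hec
      | exact hab.symm | exact hbc.symm | exact hcd.symm
      | exact hea.symm | exact heb.symm | exact hec.symm
  · intro i j hne hadj
    simp only [Igraph5, pathEdges, SimpleGraph.fromEdgeSet_adj, Set.mem_union,
      Set.mem_insert_iff, Set.mem_singleton_iff, Sym2.eq_iff] at hadj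
    fin_cases i <;> fin_cases j <;> simp_all <;>
      first
      | exact hac | exact had | exact hbd | exact hde
      | exact fun h => hac h.symm | exact fun h => had h.symm
      | exact fun h => hbd h.symm | exact fun h => hde h.symm
end

section MAIN
open SimpleGraph
theorem main_struct
    (n : ℕ) (hn : 5 ≤ n) (G : SimpleGraph (Fin n)) (hG : G.Connected)
    (hP5 : IsEmpty (SimpleGraph.pathGraph 5 ↪g G)) (hd : G.diam = 3)
    (h1 : IsEmpty (Igraph1 ↪g G)) (h2 : IsEmpty (Igraph2 ↪g G))
    (h4 : IsEmpty (Igraph4 ↪g G)) (h5 : IsEmpty (Igraph5 ↪g G)) :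
    ∃ v1 v2 v3 v4 : Fin n,
      G.Adj v1 v2 ∧ G.Adj v2 v3 ∧ G.Adj v3 v4 ∧
      ¬G.Adj v1 v4 ∧
      (∀ w, G.Adj v1 w → G.Adj w v3 ∧ ¬G.Adj w v4) ∧
      (∀ x, G.Adj v4 x → G.Adj x v2 ∧ ¬G.Adj x v1) ∧
      (∀ w w', G.Adj v1 w → G.Adj v1 w' → ¬G.Adj w w') ∧
      (∀ x x', G.Adj v4 x → G.Adj v4 x' → ¬G.Adj x x') ∧
      (∀ w x, G.Adj v1 w → G.Adj v4 x → G.Adj w x) ∧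
      (∀ u, u = v1 ∨ u = v4 ∨ G.Adj v1 u ∨ G.Adj v4 u) := by
  haveI : Nonempty (Fin n) := ⟨⟨0, by omega⟩⟩
  have hetop : G.ediam ≠ ⊤ := G.ediam_ne_top_of_diam_ne_zero (by omega)
  obtain ⟨v1, v4, h14⟩ := G.exists_dist_eq_diam
  rw [hd] at h14
  have hdle : ∀ u v : Fin n, G.dist u v ≤ 3 := fun u v => hd ▸ G.dist_le_diam hetop
  obtain ⟨p, hp⟩ := (hG.preconnected v1 v4).exists_walk_length_eq_dist
  rw [h14] at hp
  set v2 := p.getVert 1 with hv2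
  set v3 := p.getVert 2 with hv3
  have h12 : G.Adj v1 v2 := by
    have := p.adj_getVert_succ (i := 0) (by omega)
    rwa [p.getVert_zero] at this
  have h23 : G.Adj v2 v3 := p.adj_getVert_succ (i := 1) (by omega)
  have h34 : G.Adj v3 v4 := by
    have := p.adj_getVert_succ (i := 2) (by omega)
    rwa [show (2:ℕ)+1 = p.length by omega, p.getVert_length] at this
  have dist2 : ∀ x y z : Fin n, G.Adj x y → G.Adj y z → G.dist x z ≤ 2 := by
    intro x y z h h'
    have := G.dist_le (SimpleGraph.Walk.cons h (SimpleGraph.Walk.cons h' SimpleGraph.Walk.nil))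
    simpa using this
  have n14 : ¬G.Adj v1 v4 := by
    intro h
    have := G.dist_le (SimpleGraph.Walk.cons h SimpleGraph.Walk.nil)
    simp [h14] at this
  have n13 : ¬G.Adj v1 v3 := fun h => by have := dist2 v1 v3 v4 h h34; omega
  have n24 : ¬G.Adj v2 v4 := fun h => by have := dist2 v1 v2 v4 h12 h; omega
  have hAB : ∀ z, G.Adj v1 z → G.Adj z v4 → False := fun z h h' => by
    have := dist2 v1 z v4 h h'; omega
  have ne13 : v1 ≠ v3 := fun h => n14 (h ▸ h34)
  have ne14 : v1 ≠ v4 := fun h => by rw [h, G.dist_self] at h14; omega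
  have ne24 : v2 ≠ v4 := fun h => n14 (h ▸ h12)
  -- every neighbour of v1 is adjacent to v3, not to v4, and (apart from v2) not to v2
  have hA : ∀ w, G.Adj v1 w → G.Adj w v3 ∧ ¬G.Adj w v4 ∧ (w ≠ v2 → ¬G.Adj w v2) := by
    intro w hw1
    have nw4 : ¬G.Adj w v4 := fun h => hAB w hw1 h
    have new3 : w ≠ v3 := fun h => n13 (h ▸ hw1)
    have new4 : w ≠ v4 := fun h => n14 (h ▸ hw1)
    by_cases hwv2 : w = v2
    · subst hwv2; exact ⟨h23, nw4, fun h => absurd rfl h⟩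
    · have hw3 : G.Adj w v3 := by
        by_contra hw3
        by_cases hw2 : G.Adj w v2
        · exact kill2 h2 v1 v2 v3 v4 w h12 h23 h34 hw1.symm hw2
            n13 n14 n24 (fun h => hw3 h.symm) (fun h => nw4 h.symm)
            ne13 ne14 ne24 (fun h => new3 h.symm) (fun h => new4 h.symm)
        · exact killP5 hP5 w v1 v2 v3 v4 hw1.symm h12 h23 h34
            hw2 hw3 nw4 n13 n14 n24
            hwv2 new3 new4 ne13 ne14 ne24
      refine ⟨hw3, nw4, fun _ hw2 => ?_⟩
      exact kill5 h5 v1 v2 v3 v4 w h12 h23 h34 hw1.symm hw2 hw3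
        n13 n14 n24 (fun h => nw4 h.symm) ne13 ne14 ne24 (fun h => new4 h.symm)
  have hB : ∀ x, G.Adj v4 x → G.Adj x v2 ∧ ¬G.Adj x v1 ∧ (x ≠ v3 → ¬G.Adj x v3) := by
    intro x hx4
    have nx1 : ¬G.Adj x v1 := fun h => hAB x h.symm hx4.symm
    have nex2 : x ≠ v2 := fun h => n24 (h ▸ hx4).symm
    have nex1 : x ≠ v1 := fun h => n14 (h ▸ hx4).symm
    by_cases hxv3 : x = v3
    · subst hxv3; exact ⟨h23.symm, nx1, fun h => absurd rfl h⟩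
    · have hx2 : G.Adj x v2 := by
        by_contra hx2
        by_cases hx3 : G.Adj x v3
        · exact kill2 h2 v4 v3 v2 v1 x h34.symm h23.symm h12.symm hx4.symm hx3
            (fun h => n24 h.symm) (fun h => n14 h.symm) (fun h => n13 h.symm)
            (fun h => hx2 h.symm) (fun h => nx1 h.symm)
            (fun h => ne24 h.symm) (fun h => ne14 h.symm) (fun h => ne13 h.symm)
            (fun h => nex2 h.symm) (fun h => nex1 h.symm)
        · exact killP5 hP5 x v4 v3 v2 v1 hx4.symm h34.symm h23.symm h12.symm
            hx3 hx2 nx1 (fun h => n24 h.symm) (fun h => n14 h.symm) (fun h => n13 h.symm)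
            hxv3 nex2 nex1 (fun h => ne24 h.symm) (fun h => ne14 h.symm) (fun h => ne13 h.symm)
      refine ⟨hx2, nx1, fun _ hx3 => ?_⟩
      exact kill5 h5 v4 v3 v2 v1 x h34.symm h23.symm h12.symm hx4.symm hx3 hx2
        (fun h => n24 h.symm) (fun h => n14 h.symm) (fun h => n13 h.symm)
        (fun h => nx1 h.symm)
        (fun h => ne24 h.symm) (fun h => ne14 h.symm) (fun h => ne13 h.symm)
        (fun h => nex1 h.symm)
  -- A is independent
  have hAindep : ∀ w w', G.Adj v1 w → G.Adj v1 w' → ¬G.Adj w w' := by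
    intro w w' hw hw' hww
    by_cases hwv2 : w = v2
    · subst hwv2
      exact (hA w' hw').2.2 (fun h => G.loopless.irrefl _ (h ▸ hww)) hww.symm
    by_cases hw'v2 : w' = v2
    · subst hw'v2
      exact (hA w hw).2.2 (fun h => G.loopless.irrefl _ (h ▸ hww)) hww
    · exact kill5 h5 v1 w v3 v4 w' hw (hA w hw).1 h34 hw'.symm hww.symm (hA w' hw').1
        n13 n14 (hA w hw).2.1 (fun h => (hA w' hw').2.1 h.symm)
        ne13 ne14 (fun h => n14 (h ▸ hw)) (fun h => n14 (h.symm ▸ hw'))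
  have hBindep : ∀ x x', G.Adj v4 x → G.Adj v4 x' → ¬G.Adj x x' := by
    intro x x' hx hx' hxx
    by_cases hxv3 : x = v3
    · subst hxv3
      exact (hB x' hx').2.2 (fun h => G.loopless.irrefl _ (h ▸ hxx)) hxx.symm
    by_cases hx'v3 : x' = v3
    · subst hx'v3
      exact (hB x hx).2.2 (fun h => G.loopless.irrefl _ (h ▸ hxx)) hxx
    · exact kill5 h5 v4 x v2 v1 x' hx (hB x hx).1 h12.symm hx'.symm hxx.symm (hB x' hx').1
        (fun h => n24 h.symm) (fun h => n14 h.symm) (hB x hx).2.1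
        (fun h => (hB x' hx').2.1 h.symm)
        (fun h => ne24 h.symm) (fun h => ne14 h.symm)
        (fun h => n14 (h ▸ hx).symm) (fun h => n14 (h.symm ▸ hx').symm)
  -- A-B completeness
  have hABcomp : ∀ w x, G.Adj v1 w → G.Adj v4 x → G.Adj w x := by
    intro w x hw hx
    by_contra hwx
    by_cases hwv2 : w = v2
    · exact hwx (hwv2 ▸ (hB x hx).1.symm)
    by_cases hxv3 : x = v3
    · exact hwx (hxv3 ▸ (hA w hw).1)
    · exact killP5 hP5 v1 w v3 v4 x hw (hA w hw).1 h34 hx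
        n13 n14 (fun h => (hB x hx).2.1 h.symm) (hA w hw).2.1 hwx
        (fun h => (hB x hx).2.2 hxv3 h.symm)
        ne13 ne14 (by intro h; rw [← h] at hx; exact n14 hx.symm)
        (fun h => n14 (h ▸ hw)) (by intro h; rw [← h] at hx; exact hAB w hw hx.symm)
        (fun h => hxv3 h.symm)
  -- coverage
  have L1 : ∀ z, ¬G.Adj v1 z → ¬G.Adj v4 z → z ≠ v1 → z ≠ v4 →
      ¬G.Adj v2 z ∧ ¬G.Adj v3 z := by
    intro z hz1 hz4 hzne1 hzne4
    have nez2 : z ≠ v2 := fun h => hz1 (by rw [h]; exact h12)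
    have nez3 : z ≠ v3 := fun h => hz4 (by rw [h]; exact h34.symm)
    have hI4 : ¬(G.Adj v2 z ∧ G.Adj v3 z) := by
      rintro ⟨hz2, hz3⟩
      exact kill4 h4 v1 v2 v3 v4 z h12 h23 h34 hz2.symm hz3.symm n13 n14 hz1 n24 hz4
        ne13 ne14 (fun h => hzne1 h.symm) ne24 (fun h => hzne4 h.symm)
    constructor
    · intro hz2
      have hz3 : ¬G.Adj v3 z := fun hz3 => hI4 ⟨hz2, hz3⟩
      exact kill1 h1 v1 v2 v3 v4 z h12 h23 h34 hz2.symm n13 n14 hz1 n24 hz3 hz4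
        ne13 ne14 (fun h => hzne1 h.symm) ne24 (fun h => nez3 h.symm) (fun h => hzne4 h.symm)
    · intro hz3
      have hz2 : ¬G.Adj v2 z := fun hz2 => hI4 ⟨hz2, hz3⟩
      exact kill1 h1 v4 v3 v2 v1 z h34.symm h23.symm h12.symm hz3.symm
        (fun h => n24 h.symm) (fun h => n14 h.symm) hz4 (fun h => n13 h.symm) hz2 hz1
        (fun h => ne24 h.symm) (fun h => ne14 h.symm) (fun h => hzne4 h.symm)
        (fun h => ne13 h.symm) (fun h => nez2 h.symm) (fun h => hzne1 h.symm)
  have L2 : ∀ z x, ¬G.Adj v1 z → ¬G.Adj v4 z → z ≠ v1 → z ≠ v4 →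
      G.Adj v1 x → ¬G.Adj x z := by
    intro z x hz1 hz4 hzne1 hzne4 hx
    obtain ⟨hz2, hz3⟩ := L1 z hz1 hz4 hzne1 hzne4
    by_cases hxv2 : x = v2
    · exact fun h => hz2 (by rw [← hxv2]; exact h)
    · intro hxz
      obtain ⟨hx3, hx4, hx2⟩ := hA x hx
      exact kill1 h1 v4 v3 x z v2 h34.symm hx3.symm hxz h23
        (fun h => hx4 h.symm) hz4 (fun h => n24 h.symm) hz3 (hx2 hxv2) (fun h => hz2 h.symm)
        (fun h => n14 (by rw [h]; exact hx))
        (fun h => hzne4 h.symm)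
        (fun h => ne24 h.symm)
        (fun h => hz4 (by rw [← h]; exact h34.symm))
        hxv2
        (fun h => hz1 (by rw [h]; exact h12))
  have hcover : ∀ u, u = v1 ∨ u = v4 ∨ G.Adj v1 u ∨ G.Adj v4 u := by
    intro u
    by_contra hcon
    push_neg at hcon
    obtain ⟨hu1, hu4, hnu1, hnu4⟩ := hcon
    obtain ⟨hu2, hu3⟩ := L1 u hnu1 hnu4 hu1 hu4
    have hdist := hdle u v1
    have hpos : G.dist u v1 ≠ 0 :=
      SimpleGraph.dist_ne_zero_iff_ne_and_reachable.mpr ⟨hu1, hG.preconnected u v1⟩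
    have hne1 : G.dist u v1 ≠ 1 := fun h => hnu1 (SimpleGraph.dist_eq_one_iff_adj.mp h).symm
    obtain ⟨q, hq⟩ := (hG.preconnected u v1).exists_walk_length_eq_dist
    have hcases : G.dist u v1 = 2 ∨ G.dist u v1 = 3 := by omega
    rcases hcases with hc2 | hc3
    · rw [hc2] at hq
      set x := q.getVert 1 with hxdef
      have hux : G.Adj u x := by
        have := q.adj_getVert_succ (i := 0) (by omega)
        rwa [q.getVert_zero] at this
      have hx1 : G.Adj x v1 := by
        have := q.adj_getVert_succ (i := 1) (by omega)
        rwa [show (1:ℕ)+1 = q.length by omega, q.getVert_length] at this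
      exact (L2 u x hnu1 hnu4 hu1 hu4 hx1.symm) hux.symm
    · rw [hc3] at hq
      set w' := q.getVert 1 with hwdef
      set x := q.getVert 2 with hxdef
      have huw : G.Adj u w' := by
        have := q.adj_getVert_succ (i := 0) (by omega)
        rwa [q.getVert_zero] at this
      have hwx : G.Adj w' x := q.adj_getVert_succ (i := 1) (by omega)
      have hx1 : G.Adj x v1 := by
        have := q.adj_getVert_succ (i := 2) (by omega)
        rwa [show (2:ℕ)+1 = q.length by omega, q.getVert_length] at this
      have hw1 : ¬G.Adj v1 w' := by
        intro h
        have := G.dist_le (SimpleGraph.Walk.cons huw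
          (SimpleGraph.Walk.cons h.symm SimpleGraph.Walk.nil))
        simp at this
        omega
      have hwne1 : w' ≠ v1 := fun h => hnu1 (by rw [← h]; exact huw.symm)
      have hwne4 : w' ≠ v4 := fun h => hnu4 (by rw [← h]; exact huw.symm)
      by_cases hw4 : G.Adj v4 w'
      · have hBw := hB w' hw4
        have hwne3 : w' ≠ v3 := fun h => hu3 (by rw [← h]; exact huw.symm)
        exact kill1 h1 v1 v2 w' u v3 h12 hBw.1.symm huw.symm h23.symm
          hw1 hnu1 n13 hu2 (hBw.2.2 hwne3) (fun h => hu3 h.symm)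
          (fun h => hwne1 h.symm) (fun h => hu1 h.symm) ne13
          (fun h => hnu1 (by rw [← h]; exact h12)) hwne3
          (fun h => hnu4 (by rw [h]; exact h34.symm))
      · exact (L2 w' x hw1 hw4 hwne1 hwne4 hx1.symm) hwx.symm
  exact ⟨v1, v2, v3, v4, h12, h23, h34, n14,
    fun w hw => ⟨(hA w hw).1, (hA w hw).2.1⟩,
    fun x hx => ⟨(hB x hx).1, (hB x hx).2.1⟩,
    hAindep, hBindep, hABcomp, hcover⟩
end MAIN

section ASSEMBLE
open SimpleGraph

theorem assemble (n : ℕ) (G : SimpleGraph (Fin n)) (v1 v2 v3 v4 : Fin n)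
    (h12 : G.Adj v1 v2) (h34 : G.Adj v3 v4) (n14 : ¬G.Adj v1 v4)
    (hA4 : ∀ w, G.Adj v1 w → ¬G.Adj w v4)
    (hB1 : ∀ x, G.Adj v4 x → ¬G.Adj x v1)
    (hAindep : ∀ w w', G.Adj v1 w → G.Adj v1 w' → ¬G.Adj w w')
    (hBindep : ∀ x x', G.Adj v4 x → G.Adj v4 x' → ¬G.Adj x x')
    (hABcomp : ∀ w x, G.Adj v1 w → G.Adj v4 x → G.Adj w x)
    (hcover : ∀ u, u = v1 ∨ u = v4 ∨ G.Adj v1 u ∨ G.Adj v4 u) :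
    ∃ a b : ℕ, 0 < a ∧ 0 < b ∧ a + b + 2 = n ∧ Nonempty (G ≃g Jgraph a b) := by
  classical
  have ne14 : v1 ≠ v4 := by intro h; subst h; exact hB1 v2 h12 h12.symm
  have hAB' : ∀ w, G.Adj v1 w → G.Adj v4 w → False := fun w hw hw4 => hA4 w hw hw4.symm
  set A : Finset (Fin n) := Finset.univ.filter (fun w => G.Adj v1 w) with hAdef
  set B : Finset (Fin n) := Finset.univ.filter (fun w => G.Adj v4 w) with hBdef
  have memA : ∀ w, w ∈ A ↔ G.Adj v1 w := by intro w; simp [hAdef]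
  have memB : ∀ w, w ∈ B ↔ G.Adj v4 w := by intro w; simp [hBdef]
  set g : (Unit ⊕ Fin A.card) ⊕ (Unit ⊕ Fin B.card) → Fin n :=
    Sum.elim (Sum.elim (fun _ => v1) (fun i => ((A.equivFin.symm i : A) : Fin n)))
      (Sum.elim (fun _ => v4) (fun j => ((B.equivFin.symm j : B) : Fin n))) with hgdef
  have gA : ∀ i, G.Adj v1 ((A.equivFin.symm i : A) : Fin n) :=
    fun i => (memA _).mp (A.equivFin.symm i).2
  have gB : ∀ j, G.Adj v4 ((B.equivFin.symm j : B) : Fin n) :=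
    fun j => (memB _).mp (B.equivFin.symm j).2
  have hinj : Function.Injective g := by
    rintro ((u|i)|(u|j)) ((u'|i')|(u'|j')) hgg <;>
      simp only [hgdef, Sum.elim_inl, Sum.elim_inr] at hgg
    · rfl
    · exact absurd (gA i') (by rw [← hgg]; exact G.loopless.irrefl v1)
    · exact absurd hgg ne14
    · exact absurd (gB j') (by rw [← hgg]; exact fun h => n14 h.symm)
    · exact absurd (gA i) (by rw [hgg]; exact G.loopless.irrefl v1)
    · have h6 : i = i' := A.equivFin.symm.injective (Subtype.ext hgg)
      rw [h6]
    · exact absurd (gA i) (by rw [hgg]; exact fun h => n14 h)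
    · exact absurd (gB j') (fun h => hAB' _ (by rw [← hgg]; exact gA i) h)
    · exact absurd hgg ne14.symm
    · exact absurd (gA i') (by rw [← hgg]; exact fun h => n14 h)
    · rfl
    · exact absurd (gB j') (by rw [← hgg]; exact G.loopless.irrefl v4)
    · exact absurd (gB j) (by rw [hgg]; exact fun h => n14 h.symm)
    · exact absurd (gB j) (fun h => hAB' _ (by rw [hgg]; exact gA i') h)
    · exact absurd (gB j) (by rw [hgg]; exact G.loopless.irrefl v4)
    · have h16 : j = j' := B.equivFin.symm.injective (Subtype.ext hgg)
      rw [h16]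
  have hsurj : Function.Surjective g := by
    intro u
    rcases hcover u with h | h | h | h
    · exact ⟨Sum.inl (Sum.inl ()), by simp [hgdef, h]⟩
    · exact ⟨Sum.inr (Sum.inl ()), by simp [hgdef, h]⟩
    · exact ⟨Sum.inl (Sum.inr (A.equivFin ⟨u, (memA u).mpr h⟩)), by simp [hgdef]⟩
    · exact ⟨Sum.inr (Sum.inr (B.equivFin ⟨u, (memB u).mpr h⟩)), by simp [hgdef]⟩
  have hcard : A.card + B.card + 2 = n := by
    have := Fintype.card_congr (Equiv.ofBijective g ⟨hinj, hsurj⟩)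
    simp [Fintype.card_sum] at this
    omega
  refine ⟨A.card, B.card, Finset.card_pos.mpr ⟨v2, (memA v2).mpr h12⟩,
    Finset.card_pos.mpr ⟨v3, (memB v3).mpr h34.symm⟩, hcard, ⟨?_⟩⟩
  refine SimpleGraph.Iso.symm ⟨Equiv.ofBijective g ⟨hinj, hsurj⟩, ?_⟩
  rintro ((u|i)|(u|j)) ((u'|i')|(u'|j')) <;>
    simp only [Equiv.ofBijective_apply, hgdef, Sum.elim_inl, Sum.elim_inr, Jgraph,
      completeBipartiteGraph, Sum.isRight_inl, Sum.isRight_inr, Sum.isLeft_inl,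
      Sum.isLeft_inr]
  · exact iff_of_false (G.loopless.irrefl v1) (by simp)
  · exact iff_of_true (gA i') (by simp)
  · exact iff_of_false n14 (by simp)
  · exact iff_of_false (fun h => hAB' _ h (gB j')) (by simp)
  · exact iff_of_true (gA i).symm (by simp)
  · exact iff_of_false (hAindep _ _ (gA i) (gA i')) (by simp)
  · exact iff_of_false (hA4 _ (gA i)) (by simp)
  · exact iff_of_true (hABcomp _ _ (gA i) (gB j')) (by simp)
  · exact iff_of_false (fun h => n14 h.symm) (by simp)
  · exact iff_of_false (fun h => hA4 _ (gA i') h.symm) (by simp)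
  · exact iff_of_false (G.loopless.irrefl v4) (by simp)
  · exact iff_of_true (gB j') (by simp)
  · exact iff_of_false (hB1 _ (gB j)) (by simp)
  · exact iff_of_true (hABcomp _ _ (gA i') (gB j)).symm (by simp)
  · exact iff_of_true (gB j).symm (by simp)
  · exact iff_of_false (hBindep _ _ (gB j) (gB j')) (by simp)
end ASSEMBLE

/-- Let `G` be a connected `P₅`-free graph on `n ≥ 5` vertices with
diameter `3`, such that none of `I₁, I₂, I₄, I₅` is an induced subgraph of `G`. Then `G` is
isomorphic to `J(a,b)` for some positive integers `a, b` with `a + b + 2 = n`. -/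
theorem iso_Jgraph_of_P5_free_diam_three
    (n : ℕ) (hn : 5 ≤ n) (G : SimpleGraph (Fin n)) (hG : G.Connected)
    (hP5 : IsEmpty (SimpleGraph.pathGraph 5 ↪g G)) (hd : G.diam = 3)
    (h1 : IsEmpty (Igraph1 ↪g G)) (h2 : IsEmpty (Igraph2 ↪g G))
    (h4 : IsEmpty (Igraph4 ↪g G)) (h5 : IsEmpty (Igraph5 ↪g G)) :
    ∃ a b : ℕ, 0 < a ∧ 0 < b ∧ a + b + 2 = n ∧ Nonempty (G ≃g Jgraph a b) := by
  obtain ⟨v1, v2, v3, v4, h12, h23, h34, n14', hA', hB', hAindep, hBindep, hABcomp, hcover⟩ :=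
    main_struct n hn G hG hP5 hd h1 h2 h4 h5
  exact assemble n G v1 v2 v3 v4 h12 h34 n14' (fun w hw => (hA' w hw).2)
    (fun x hx => (hB' x hx).2) hAindep hBindep hABcomp hcover
end

section
/- For an integer n ≥ 6, the distance Laplacian spectrum of K_2 ∇ (n−2)K_1 is {(2n−2) with multiplicity n−3, n with multiplicity 2, 0}; for odd n ≥ 6 the distance Laplacian spectrum of K_1 ∇ K_{(n−1)/2,(n−1)/2} is {((3n−1)/2) with multiplicity n−3, n with multiplicity 2, 0}; and for n ≥ 6 divisible by 3 the distance Laplacian spectrum of K_{n/3,n/3,n/3} is {(4n/3) with multiplicity n−3, n with multiplicity 2, 0}. -/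
open Matrix

/-- The join `G ∇ H` of two graphs: disjoint union together with all edges between them. -/
def graphJoin {α β : Type*} (G : SimpleGraph α) (H : SimpleGraph β) :
    SimpleGraph (α ⊕ β) where
  Adj x y :=
    match x, y with
    | Sum.inl a, Sum.inl b => G.Adj a b
    | Sum.inr a, Sum.inr b => H.Adj a b
    | Sum.inl _, Sum.inr _ => True
    | Sum.inr _, Sum.inl _ => True
  symm := by
    constructor
    rintro (a | a) (b | b) h
    · exact G.symm.symm _ _ h
    · trivial
    · trivial
    · exact H.symm.symm _ _ h
  loopless := by
    constructor
    rintro (a | a) h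
    · exact G.loopless.irrefl a h
    · exact H.loopless.irrefl a h


open Polynomial

section Hermitian
variable {m : Type*} [Fintype m] [DecidableEq m] {M : Matrix m m ℝ}

lemma herm_charpoly (hM : M.IsHermitian) : M.charpoly = ∏ i, (X - C (hM.eigenvalues i)) := by
  classical
  set U : Matrix m m ℝ := (hM.eigenvectorUnitary : Matrix m m ℝ) with hUdef
  have hU1 : U * star U = 1 := mem_unitaryGroup_iff.mp hM.eigenvectorUnitary.2
  have hU2 : star U * U = 1 := mem_unitaryGroup_iff'.mp hM.eigenvectorUnitary.2
  set D : Matrix m m ℝ := diagonal (RCLike.ofReal ∘ hM.eigenvalues) with hDdef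
  have hspec : M = U * D * star U := hM.spectral_theorem
  have key : charmatrix M = (U.map C) * charmatrix D * ((star U).map C) := by
    rw [charmatrix, charmatrix, mul_sub, sub_mul]
    congr 1
    · have : (U.map C) * Matrix.scalar m (X : ℝ[X]) = Matrix.scalar m (X : ℝ[X]) * (U.map C) :=
        (scalar_commute (X : ℝ[X]) (Commute.all _) _).symm
      rw [this, mul_assoc, ← Matrix.map_mul, hU1]
      simp [Matrix.scalar]
    · have : (RingHom.mapMatrix (C : ℝ →+* ℝ[X])) M =
          (RingHom.mapMatrix (C : ℝ →+* ℝ[X])) (U * D * star U) := by rw [← hspec]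
      simp only [RingHom.mapMatrix_apply, _root_.map_mul] at this
      show M.map ⇑C = U.map ⇑C * D.map ⇑C * (star U).map ⇑C
      rw [this]
  have hdet : M.charpoly = (charmatrix D).det := by
    rw [Matrix.charpoly, key, det_mul, det_mul, mul_comm, ← mul_assoc, ← det_mul,
      ← Matrix.map_mul, hU2]
    simp [Matrix.charpoly]
  rw [hdet]
  have : charmatrix D = diagonal (fun i => (X : ℝ[X]) - C (hM.eigenvalues i)) := by
    ext i j
    by_cases h : i = j <;>
      simp [charmatrix_apply, diagonal, h, hDdef, RCLike.ofReal_real_eq_id]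
  rw [this, det_diagonal]

lemma herm_roots (hM : M.IsHermitian) :
    M.charpoly.roots = Multiset.map hM.eigenvalues Finset.univ.val := by
  rw [herm_charpoly hM]
  have : (∏ i, (X - C (hM.eigenvalues i)))
      = ((Multiset.map hM.eigenvalues Finset.univ.val).map fun a => X - C a).prod := by
    rw [Multiset.map_map]; rfl
  rw [this, roots_multiset_prod_X_sub_C]

lemma herm_trace (hM : M.IsHermitian) : ∑ i, hM.eigenvalues i = M.trace := by
  set U : Matrix m m ℝ := (hM.eigenvectorUnitary : Matrix m m ℝ) with hUdef
  have hU2 : star U * U = 1 := mem_unitaryGroup_iff'.mp hM.eigenvectorUnitary.2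
  conv_rhs => rw [show M = U * diagonal (RCLike.ofReal ∘ hM.eigenvalues) * star U from
    hM.spectral_theorem]
  rw [Matrix.trace_mul_cycle, hU2, one_mul, trace_diagonal]
  simp [RCLike.ofReal_real_eq_id]

lemma herm_trace_sq (hM : M.IsHermitian) : ∑ i, (hM.eigenvalues i) ^ 2 = (M * M).trace := by
  set U : Matrix m m ℝ := (hM.eigenvectorUnitary : Matrix m m ℝ) with hUdef
  have hU2 : star U * U = 1 := mem_unitaryGroup_iff'.mp hM.eigenvectorUnitary.2
  set D : Matrix m m ℝ := diagonal (RCLike.ofReal ∘ hM.eigenvalues) with hDdef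
  have hspec : M = U * D * star U := hM.spectral_theorem
  have : M * M = U * (D * D) * star U := by
    rw [hspec]
    calc U * D * star U * (U * D * star U) = U * D * (star U * U) * D * star U := by
          noncomm_ring
      _ = U * (D * D) * star U := by rw [hU2]; noncomm_ring
  rw [this, Matrix.trace_mul_cycle, hU2, one_mul, hDdef, diagonal_mul_diagonal, trace_diagonal]
  simp [RCLike.ofReal_real_eq_id, pow_two]

section Model
variable {V : Type*} [Fintype V] [DecidableEq V]

noncomputable def mm (π : V → Fin 3) (c : Fin 3 → ℕ) (n : ℕ) : Matrix V V ℝ :=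
  Matrix.of fun i j =>
    if i = j then (n : ℝ) + (c (π i) : ℝ) - 2 else if π i = π j then -2 else -1

lemma mm_herm (π : V → Fin 3) (c : Fin 3 → ℕ) (n : ℕ) : (mm π c n).IsHermitian := by
  ext i j
  simp only [conjTranspose_apply, mm, of_apply, star_trivial]
  by_cases h : i = j
  · subst h; simp
  · simp only [if_neg h, if_neg (Ne.symm h)]
    by_cases hp : π i = π j
    · rw [if_pos hp, if_pos hp.symm]
    · rw [if_neg hp, if_neg (fun hh => hp hh.symm)]

lemma mm_key (π : V → Fin 3) (c : Fin 3 → ℕ) (n : ℕ) (v : V → ℝ) (μ : ℝ)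
    (heq : mm π c n *ᵥ v = μ • v) (i : V) :
    μ * v i = ((n : ℝ) + (c (π i) : ℝ)) * v i
      - (∑ j ∈ Finset.univ.filter fun x => π x = π i, v j) - ∑ j, v j := by
  have h := congrFun heq i
  simp only [mulVec, dotProduct, Pi.smul_apply, smul_eq_mul] at h
  have expand : ∀ j, mm π c n i j * v j =
      (-1) * v j + (if π j = π i then (-1 : ℝ) else 0) * v j
        + (if j = i then ((n : ℝ) + (c (π i) : ℝ)) else 0) * v j := by
    intro j
    by_cases hj : i = j
    · subst hj; simp [mm]; ring
    · simp only [mm, of_apply, if_neg hj, if_neg (Ne.symm hj)]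
      by_cases hp : π i = π j
      · rw [if_pos hp, if_pos hp.symm]; ring
      · rw [if_neg hp, if_neg (fun hh => hp hh.symm)]; ring
  rw [Finset.sum_congr rfl (fun j _ => expand j)] at h
  rw [Finset.sum_add_distrib, Finset.sum_add_distrib] at h
  have e1 : ∑ j, (-1 : ℝ) * v j = -∑ j, v j := by
    rw [← Finset.sum_neg_distrib]; exact Finset.sum_congr rfl (fun j _ => by ring)
  have e2 : ∑ j, (if π j = π i then (-1 : ℝ) else 0) * v j
      = -∑ j ∈ Finset.univ.filter fun x => π x = π i, v j := by
    rw [← Finset.sum_neg_distrib, Finset.sum_filter]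
    exact Finset.sum_congr rfl (fun j _ => by split <;> ring)
  have e3 : ∑ j, (if j = i then ((n : ℝ) + (c (π i) : ℝ)) else 0) * v j
      = ((n : ℝ) + (c (π i) : ℝ)) * v i := by
    have : ∀ j : V, (if j = i then ((n : ℝ) + (c (π i) : ℝ)) else 0) * v j
        = if j = i then ((n : ℝ) + (c (π i) : ℝ)) * v j else 0 := by
      intro j; split <;> ring
    rw [Finset.sum_congr rfl (fun j _ => this j), Finset.sum_ite_eq' Finset.univ i
      (fun j => ((n : ℝ) + (c (π i) : ℝ)) * v j), if_pos (Finset.mem_univ i)]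
  rw [e1, e2, e3] at h
  rw [← h]; ring

lemma mm_eig_mem (π : V → Fin 3) (c : Fin 3 → ℕ) (n : ℕ) (L : ℝ)
    (hfib : ∀ s, (Finset.univ.filter fun x => π x = s).card = c s)
    (hsum : c 0 + c 1 + c 2 = n) (hc : ∀ s, 1 ≤ c s) (h6 : 6 ≤ n)
    (hL : ∀ s, c s = 1 ∨ (n : ℝ) + (c s : ℝ) = L)
    {μ : ℝ} {v : V → ℝ} (hv : v ≠ 0) (heq : mm π c n *ᵥ v = μ • v) :
    μ = 0 ∨ μ = (n : ℝ) ∨ μ = L := by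
  by_contra hcon
  push_neg at hcon
  obtain ⟨hμ0, hμn, hμL⟩ := hcon
  set t : Fin 3 → ℝ := fun s => ∑ j ∈ Finset.univ.filter fun x => π x = s, v j with ht
  have key : ∀ i, μ * v i = ((n : ℝ) + (c (π i) : ℝ)) * v i - t (π i) - ∑ j, v j :=
    fun i => mm_key π c n v μ heq i
  -- v is constant on each fiber
  have hconst : ∀ i j, π i = π j → v i = v j := by
    intro i j hij
    rcases hL (π i) with h1 | h2
    · -- fiber has exactly one element
      have hci : (Finset.univ.filter fun x => π x = π i).card = 1 := by rw [hfib, h1]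
      obtain ⟨a, ha⟩ := Finset.card_eq_one.mp hci
      have hi : i ∈ Finset.univ.filter fun x => π x = π i := by simp
      have hj : j ∈ Finset.univ.filter fun x => π x = π i := by simp [hij.symm]
      rw [ha, Finset.mem_singleton] at hi hj
      rw [hi, hj]
    · have e1 := key i
      have e2 := key j
      rw [← hij] at e2
      have : (μ - ((n : ℝ) + (c (π i) : ℝ))) * (v i - v j) = 0 := by linarith [e1, e2]
      rcases mul_eq_zero.mp this with h | h
      · exfalso; apply hμL; rw [← h2]; linarith
      · linarith
  -- pick representatives
  have hrep : ∀ s : Fin 3, ∃ w : V, π w = s := by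
    intro s
    have : 0 < (Finset.univ.filter fun x => π x = s).card := by
      rw [hfib]; exact hc s
    obtain ⟨w, hw⟩ := Finset.card_pos.mp this
    exact ⟨w, (Finset.mem_filter.mp hw).2⟩
  choose w hw using hrep
  set x : Fin 3 → ℝ := fun s => v (w s) with hx
  have hvx : ∀ i, v i = x (π i) := fun i => hconst i (w (π i)) (hw (π i)).symm
  have hts : ∀ s, t s = (c s : ℝ) * x s := by
    intro s
    rw [ht]
    simp only
    rw [Finset.sum_congr rfl (fun j hj => by
      rw [hvx j, (Finset.mem_filter.mp hj).2])]
    rw [Finset.sum_const, ← hfib s]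
    simp [mul_comm]
  have hT : (∑ j, v j) = ∑ s : Fin 3, (c s : ℝ) * x s := by
    rw [← Finset.sum_fiberwise Finset.univ π v]
    exact Finset.sum_congr rfl fun s _ => hts s
  set T : ℝ := ∑ s : Fin 3, (c s : ℝ) * x s with hTdef
  have heqs : ∀ s, (μ - (n : ℝ)) * x s = -T := by
    intro s
    have h := key (w s)
    rw [hw s] at h
    have hxs : v (w s) = x s := rfl
    rw [hxs, hts s, hT] at h
    linarith
  have hxeq : ∀ s s' : Fin 3, x s = x s' := by
    intro s s'
    have h1 := heqs s
    have h2 := heqs s'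
    have hne : μ - (n : ℝ) ≠ 0 := fun h => hμn (by linarith)
    field_simp at h1 h2
    have : (μ - (n : ℝ)) * x s = (μ - (n : ℝ)) * x s' := by linarith
    exact mul_left_cancel₀ hne this
  have hTx : T = (n : ℝ) * x 0 := by
    have a1 : x 1 = x 0 := hxeq 1 0
    have a2 : x 2 = x 0 := hxeq 2 0
    rw [hTdef, Fin.sum_univ_three, a1, a2]
    have hcast : ((c 0 : ℝ) + c 1 + c 2) = (n : ℝ) := by
      push_cast [← hsum]; ring
    linear_combination (x 0) * hcast
  have hx0 : x 0 = 0 := by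
    have h0 := heqs 0
    rw [hTx] at h0
    have : μ * x 0 = 0 := by linarith
    rcases mul_eq_zero.mp this with h | h
    · exact absurd h hμ0
    · exact h
  apply hv
  funext i
  have := hvx i
  rw [hxeq (π i) 0, hx0] at this
  simpa using this

lemma sum_comp_fiber (π : V → Fin 3) (c : Fin 3 → ℕ)
    (hfib : ∀ s, (Finset.univ.filter fun x => π x = s).card = c s) (f : Fin 3 → ℝ) :
    ∑ i : V, f (π i) = ∑ s : Fin 3, (c s : ℝ) * f s := by
  rw [← Finset.sum_fiberwise' Finset.univ π f]
  refine Finset.sum_congr rfl fun s _ => ?_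
  rw [Finset.sum_const, ← hfib s]
  simp [mul_comm]

lemma mm_trace (π : V → Fin 3) (c : Fin 3 → ℕ) (n : ℕ)
    (hfib : ∀ s, (Finset.univ.filter fun x => π x = s).card = c s) :
    (mm π c n).trace = ∑ s : Fin 3, (c s : ℝ) * ((n : ℝ) + (c s : ℝ) - 2) := by
  rw [Matrix.trace]
  have : ∀ i : V, (mm π c n).diag i = (n : ℝ) + (c (π i) : ℝ) - 2 := by
    intro i; simp [mm, Matrix.diag]
  rw [Finset.sum_congr rfl fun i _ => this i]
  exact sum_comp_fiber π c hfib (fun s => (n : ℝ) + (c s : ℝ) - 2)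

lemma mm_trace_sq (π : V → Fin 3) (c : Fin 3 → ℕ) (n : ℕ)
    (hfib : ∀ s, (Finset.univ.filter fun x => π x = s).card = c s)
    (hcard : Fintype.card V = n) :
    (mm π c n * mm π c n).trace
      = ∑ s : Fin 3, (c s : ℝ) *
          ((n : ℝ) + 3 * (c s : ℝ) + (((n : ℝ) + (c s : ℝ) - 2) ^ 2 - 4)) := by
  have hsymm : ∀ i j : V, mm π c n j i = mm π c n i j := by
    intro i j
    have := congrFun (congrFun (mm_herm π c n) i) j
    simpa [Matrix.conjTranspose_apply] using this
  have htr : (mm π c n * mm π c n).trace = ∑ i : V, ∑ j : V, (mm π c n i j) ^ 2 := by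
    rw [Matrix.trace]
    refine Finset.sum_congr rfl fun i _ => ?_
    simp only [Matrix.diag, Matrix.mul_apply]
    exact Finset.sum_congr rfl fun j _ => by rw [hsymm i j, pow_two]
  rw [htr]
  have inner : ∀ i : V, ∑ j : V, (mm π c n i j) ^ 2
      = (n : ℝ) + 3 * (c (π i) : ℝ) + (((n : ℝ) + (c (π i) : ℝ) - 2) ^ 2 - 4) := by
    intro i
    have expand : ∀ j : V, (mm π c n i j) ^ 2
        = 1 + (if π j = π i then (3 : ℝ) else 0)
          + (if j = i then (((n : ℝ) + (c (π i) : ℝ) - 2) ^ 2 - 4) else 0) := by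
      intro j
      by_cases hj : i = j
      · subst hj; simp [mm]; ring
      · simp only [mm, of_apply, if_neg hj, if_neg (Ne.symm hj)]
        by_cases hp : π i = π j
        · rw [if_pos hp, if_pos hp.symm]; norm_num
        · rw [if_neg hp, if_neg (fun hh => hp hh.symm)]; norm_num
    rw [Finset.sum_congr rfl fun j _ => expand j, Finset.sum_add_distrib,
      Finset.sum_add_distrib]
    have e1 : ∑ _j : V, (1 : ℝ) = (n : ℝ) := by
      rw [Finset.sum_const, Finset.card_univ, hcard]; simp
    have e2 : ∑ j : V, (if π j = π i then (3 : ℝ) else 0) = 3 * (c (π i) : ℝ) := by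
      rw [← Finset.sum_filter, Finset.sum_const, ← hfib (π i)]
      simp [mul_comm]
    have e3 : ∑ j : V, (if j = i then (((n : ℝ) + (c (π i) : ℝ) - 2) ^ 2 - 4) else 0)
        = ((n : ℝ) + (c (π i) : ℝ) - 2) ^ 2 - 4 := by
      rw [Finset.sum_ite_eq' Finset.univ i _, if_pos (Finset.mem_univ i)]
    rw [e1, e2, e3]
  rw [Finset.sum_congr rfl fun i _ => inner i]
  exact sum_comp_fiber π c hfib (fun s => (n : ℝ) + 3 * (c s : ℝ) + (((n : ℝ) + (c s : ℝ) - 2) ^ 2 - 4))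

theorem mm_roots (π : V → Fin 3) (c : Fin 3 → ℕ) (n : ℕ) (L : ℝ)
    (hfib : ∀ s, (Finset.univ.filter fun x => π x = s).card = c s)
    (hsum : c 0 + c 1 + c 2 = n) (hc : ∀ s, 1 ≤ c s) (h6 : 6 ≤ n)
    (hcard : Fintype.card V = n)
    (hL : ∀ s, c s = 1 ∨ (n : ℝ) + (c s : ℝ) = L) :
    (mm π c n).charpoly.roots
      = Multiset.replicate (n - 3) L + Multiset.replicate 2 (n : ℝ) + {0} := by
  classical
  have hM := mm_herm π c n
  set E : V → ℝ := hM.eigenvalues with hE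
  have hroots : (mm π c n).charpoly.roots = Multiset.map E Finset.univ.val := herm_roots hM
  -- L > n
  obtain ⟨s₀, hs₀⟩ : ∃ s : Fin 3, 2 ≤ c s := by
    by_contra hcon
    push_neg at hcon
    have h0 := hcon 0; have h1 := hcon 1; have h2 := hcon 2
    omega
  have hLval : (n : ℝ) + (c s₀ : ℝ) = L := by
    rcases hL s₀ with h | h
    · omega
    · exact h
  have hLgt : (n : ℝ) < L := by
    have : (2 : ℝ) ≤ (c s₀ : ℝ) := by exact_mod_cast hs₀
    linarith
  have hn0 : (0 : ℝ) < (n : ℝ) := by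
    have : (6 : ℝ) ≤ (n : ℝ) := by exact_mod_cast h6
    linarith
  -- each eigenvalue is 0, n or L
  have hmem : ∀ i : V, E i = 0 ∨ E i = (n : ℝ) ∨ E i = L := by
    intro i
    have hnz : (⇑(hM.eigenvectorBasis i) : V → ℝ) ≠ 0 := by
      intro hzero
      apply hM.eigenvectorBasis.orthonormal.ne_zero i
      ext j
      exact congrFun hzero j
    exact mm_eig_mem π c n L hfib hsum hc h6 hL hnz (hM.mulVec_eigenvectorBasis i)
  -- cubic factor hypotheses
  have hfac : ∀ s : Fin 3, ((c s : ℝ) - 1) * ((c s : ℝ) + (n : ℝ) - L) = 0 := by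
    intro s
    rcases hL s with h | h
    · rw [h]; simp
    · have : (c s : ℝ) + (n : ℝ) - L = 0 := by linarith
      rw [this, mul_zero]
  have hcast : (c 0 : ℝ) + (c 1 : ℝ) + (c 2 : ℝ) = (n : ℝ) := by
    push_cast [← hsum]; ring
  -- moments
  have hT1 : ∑ i : V, E i = 2 * (n : ℝ) + ((n : ℝ) - 3) * L := by
    rw [herm_trace hM, mm_trace π c n hfib, Fin.sum_univ_three]
    linear_combination hfac 0 + hfac 1 + hfac 2 + (L - 1) * hcast
  have hT2 : ∑ i : V, (E i) ^ 2 = 2 * (n : ℝ) ^ 2 + ((n : ℝ) - 3) * L ^ 2 := by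
    rw [herm_trace_sq hM, mm_trace_sq π c n hfib hcard, Fin.sum_univ_three]
    linear_combination ((c 0 : ℝ) + n + L) * hfac 0 + ((c 1 : ℝ) + n + L) * hfac 1
      + ((c 2 : ℝ) + n + L) * hfac 2 + (L ^ 2 - (n : ℝ)) * hcast
  -- counting
  set R : Multiset ℝ := Multiset.map E Finset.univ.val with hR
  have hcardR : Multiset.card R = n := by
    rw [hR, Multiset.card_map]
    simpa [Finset.card_univ] using hcard
  have hmemR : ∀ x ∈ R, x = 0 ∨ x = (n : ℝ) ∨ x = L := by
    intro x hx
    obtain ⟨i, _, rfl⟩ := Multiset.mem_map.mp hx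
    exact hmem i
  have d1 : (0 : ℝ) ≠ (n : ℝ) := by linarith
  have d2 : (0 : ℝ) ≠ L := by linarith
  have d3 : (n : ℝ) ≠ L := by linarith
  set a := R.count 0 with ha
  set b := R.count (n : ℝ) with hb
  set cc := R.count L with hcc
  have hdecomp : R = Multiset.replicate cc L + Multiset.replicate b (n : ℝ)
      + Multiset.replicate a 0 := by
    refine Multiset.ext.mpr fun x => ?_
    simp only [Multiset.count_add, Multiset.count_replicate]
    by_cases hx0 : x = 0
    · subst hx0
      rw [if_neg (Ne.symm d2), if_neg (Ne.symm d1), if_pos rfl]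
      omega
    · by_cases hxn : x = (n : ℝ)
      · subst hxn
        rw [if_neg (Ne.symm d3), if_pos rfl, if_neg d1]
        omega
      · by_cases hxL : x = L
        · subst hxL
          rw [if_pos rfl, if_neg d3, if_neg d2]
          omega
        · rw [if_neg (fun h => hxL h.symm), if_neg (fun h => hxn h.symm),
            if_neg (fun h => hx0 h.symm)]
          have hnotmem : x ∉ R := fun hmem' => by
            rcases hmemR x hmem' with h | h | h
            exacts [hx0 h, hxn h, hxL h]
          simp [Multiset.count_eq_zero_of_notMem hnotmem]
  -- derive the counts
  have hsumR : R.sum = ∑ i : V, E i := by rw [hR]; rfl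
  have hsumsqR : (R.map fun x => x ^ 2).sum = ∑ i : V, (E i) ^ 2 := by
    rw [hR, Multiset.map_map]; rfl
  have eq1 : (cc : ℝ) * L + (b : ℝ) * (n : ℝ) = 2 * (n : ℝ) + ((n : ℝ) - 3) * L := by
    have := hsumR
    rw [hdecomp] at this
    simp only [Multiset.sum_add, Multiset.sum_replicate, nsmul_eq_mul, mul_zero, add_zero] at this
    rw [hT1] at this
    linarith
  have eq2 : (cc : ℝ) * L ^ 2 + (b : ℝ) * (n : ℝ) ^ 2
      = 2 * (n : ℝ) ^ 2 + ((n : ℝ) - 3) * L ^ 2 := by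
    have := hsumsqR
    rw [hdecomp] at this
    simp only [Multiset.map_add, Multiset.map_replicate, Multiset.sum_add,
      Multiset.sum_replicate, nsmul_eq_mul] at this
    rw [hT2] at this
    norm_num at this
    linarith
  have eqcard : cc + b + a = n := by
    have := hcardR
    rw [hdecomp] at this
    simp only [Multiset.card_add, Multiset.card_replicate] at this
    omega
  -- solve the linear system
  have hbr : (b : ℝ) = 2 := by
    have key : ((b : ℝ) - 2) * ((n : ℝ) * (L - (n : ℝ))) = 0 := by
      linear_combination L * eq1 - eq2
    have hne : (n : ℝ) * (L - (n : ℝ)) ≠ 0 :=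
      ne_of_gt (mul_pos hn0 (by linarith))
    rcases mul_eq_zero.mp key with h | h
    · linarith
    · exact absurd h hne
  have hccr : (cc : ℝ) = (n : ℝ) - 3 := by
    have key : ((cc : ℝ) - ((n : ℝ) - 3)) * L = 0 := by
      linear_combination eq1 - (n : ℝ) * hbr
    rcases mul_eq_zero.mp key with h | h
    · linarith
    · exfalso; exact (by linarith : (0:ℝ) < L).ne' h
  have hbnat : b = 2 := by exact_mod_cast hbr
  have hccnat : cc = n - 3 := by
    have : (cc : ℝ) = ((n - 3 : ℕ) : ℝ) := by
      rw [hccr, Nat.cast_sub (by omega)]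
      norm_num
    exact_mod_cast this
  have hanat : a = 1 := by omega
  rw [hroots, hdecomp, hbnat, hccnat, hanat, Multiset.replicate_one]

lemma dist_model (G : SimpleGraph V) (π : V → Fin 3)
    (hAdj : ∀ i j, G.Adj i j ↔ π i ≠ π j)
    (hsurj : ∀ s : Fin 3, ∃ v, π v = s) (i j : V) :
    G.dist i j = if i = j then 0 else if π i = π j then 2 else 1 := by
  by_cases hij : i = j
  · simp [hij]
  · rw [if_neg hij]
    by_cases hp : π i = π j
    · rw [if_pos hp]
      -- find a common neighbor in a different part
      have : ∃ s : Fin 3, s ≠ π i := by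
        by_cases h0 : π i = 0
        · exact ⟨1, by simp [h0]⟩
        · exact ⟨0, fun h => h0 h.symm⟩
      obtain ⟨s, hs⟩ := this
      obtain ⟨k, hk⟩ := hsurj s
      have h1 : G.Adj i k := (hAdj i k).mpr (by rw [hk]; exact fun h => hs h.symm)
      have h2 : G.Adj k j := (hAdj k j).mpr (by rw [hk, ← hp]; exact hs)
      have hw : G.dist i j ≤ 2 := by
        have := SimpleGraph.dist_le (SimpleGraph.Walk.cons h1 (SimpleGraph.Walk.cons h2
          SimpleGraph.Walk.nil))
        simpa using this
      have hne0 : G.dist i j ≠ 0 := by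
        rw [SimpleGraph.dist_ne_zero_iff_ne_and_reachable]
        exact ⟨hij, ⟨SimpleGraph.Walk.cons h1 (SimpleGraph.Walk.cons h2 SimpleGraph.Walk.nil)⟩⟩
      have hne1 : G.dist i j ≠ 1 := by
        rw [Ne, SimpleGraph.dist_eq_one_iff_adj, hAdj]
        simp [hp]
      omega
    · rw [if_neg hp]
      exact SimpleGraph.dist_eq_one_iff_adj.mpr ((hAdj i j).mpr hp)

lemma distLaplacian_eq_mm (G : SimpleGraph V) (π : V → Fin 3) (c : Fin 3 → ℕ) (n : ℕ)
    (hAdj : ∀ i j, G.Adj i j ↔ π i ≠ π j)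
    (hsurj : ∀ s : Fin 3, ∃ v, π v = s)
    (hfib : ∀ s, (Finset.univ.filter fun x => π x = s).card = c s)
    (hcard : Fintype.card V = n) :
    distLaplacian G = mm π c n := by
  have hd := dist_model G π hAdj hsurj
  ext i j
  by_cases hij : i = j
  · subst hij
    simp only [distLaplacian, mm, Matrix.of_apply, if_pos rfl]
    have expand : ∀ k : V, (G.dist i k : ℝ)
        = 1 + (if π k = π i then (1 : ℝ) else 0) - (if k = i then 2 else 0) := by
      intro k
      rw [hd i k]
      by_cases hk : i = k
      · subst hk; simp only [if_pos rfl]; norm_num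
      · rw [if_neg hk, if_neg (Ne.symm hk)]
        by_cases hp : π i = π k
        · rw [if_pos hp, if_pos hp.symm]; norm_num
        · rw [if_neg hp, if_neg (fun h => hp h.symm)]; norm_num
    rw [Finset.sum_congr rfl fun k _ => expand k]
    rw [Finset.sum_sub_distrib, Finset.sum_add_distrib]
    have e1 : ∑ _k : V, (1 : ℝ) = (n : ℝ) := by
      rw [Finset.sum_const, Finset.card_univ, hcard]; simp
    have e2 : ∑ k : V, (if π k = π i then (1 : ℝ) else 0) = (c (π i) : ℝ) := by
      rw [← Finset.sum_filter, Finset.sum_const, ← hfib (π i)]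
      simp
    have e3 : ∑ k : V, (if k = i then (2 : ℝ) else 0) = 2 := by
      rw [Finset.sum_ite_eq' Finset.univ i _, if_pos (Finset.mem_univ i)]
    rw [e1, e2, e3]
    simp
  · simp only [distLaplacian, mm, Matrix.of_apply, if_neg hij]
    rw [hd i j, if_neg hij]
    by_cases hp : π i = π j
    · rw [if_pos hp, if_pos hp]; norm_num
    · rw [if_neg hp, if_neg hp]; norm_num

end Model

section Apply

-- Graph 1 : K_2 ∇ (n-2)K_1
theorem part1 (n : ℕ) (hn : 6 ≤ n) :
    (distLaplacian (graphJoin (⊤ : SimpleGraph (Fin 2))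
        (⊥ : SimpleGraph (Fin (n - 2))))).charpoly.roots =
      Multiset.replicate (n - 3) (2 * (n : ℝ) - 2) +
        Multiset.replicate 2 (n : ℝ) + {0} := by
  set π : Fin 2 ⊕ Fin (n - 2) → Fin 3 :=
    Sum.elim (fun a => Fin.castLE (by norm_num) a) (fun _ => 2) with hπ
  set c : Fin 3 → ℕ := ![1, 1, n - 2] with hc
  have hAdj : ∀ i j, (graphJoin (⊤ : SimpleGraph (Fin 2))
      (⊥ : SimpleGraph (Fin (n - 2)))).Adj i j ↔ π i ≠ π j := by
    rintro (a | a) (b | b)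
    · show (⊤ : SimpleGraph (Fin 2)).Adj a b ↔ _
      rw [SimpleGraph.top_adj]
      constructor
      · intro h hcon
        simp only [hπ, Sum.elim_inl] at hcon
        exact h (Fin.castLE_injective (show 2 ≤ 3 by norm_num) hcon)
      · intro h hcon
        exact h (by rw [hcon])
    · show True ↔ _
      simp only [hπ, Sum.elim_inl, Sum.elim_inr, true_iff]
      intro hcon
      have := congrArg Fin.val hcon
      simp [Fin.castLE] at this
      omega
    · show True ↔ _
      simp only [hπ, Sum.elim_inl, Sum.elim_inr, true_iff]
      intro hcon
      have := congrArg Fin.val hcon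
      simp [Fin.castLE] at this
      omega
    · show (⊥ : SimpleGraph (Fin (n - 2))).Adj a b ↔ _
      simp [hπ]
  have hsurj : ∀ s : Fin 3, ∃ v, π v = s := by
    intro s
    fin_cases s
    · exact ⟨Sum.inl 0, rfl⟩
    · exact ⟨Sum.inl 1, rfl⟩
    · exact ⟨Sum.inr ⟨0, by omega⟩, rfl⟩
  have hfib : ∀ s, (Finset.univ.filter fun x => π x = s).card = c s := by
    intro s
    rw [Finset.card_filter]
    rw [Fintype.sum_sum_type]
    fin_cases s
    · simp only [hπ, hc, Fin.sum_univ_two, Fin.ext_iff]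
      simp
    · simp [hπ, hc, Fin.sum_univ_two, Fin.ext_iff]
      decide
    · simp [hπ, hc, Fin.sum_univ_two, Fin.ext_iff]
  have hcard : Fintype.card (Fin 2 ⊕ Fin (n - 2)) = n := by
    simp; omega
  have hsum : c 0 + c 1 + c 2 = n := by simp [hc]; omega
  have hc1 : ∀ s, 1 ≤ c s := by
    intro s; fin_cases s <;> simp [hc] <;> omega
  have hL : ∀ s, c s = 1 ∨ (n : ℝ) + (c s : ℝ) = 2 * (n : ℝ) - 2 := by
    intro s
    fin_cases s
    · left; rfl
    · left; rfl
    · right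
      simp only [hc]
      show (n : ℝ) + ((n - 2 : ℕ) : ℝ) = _
      rw [Nat.cast_sub (by omega)]
      push_cast; ring
  rw [distLaplacian_eq_mm _ π c n hAdj hsurj hfib hcard]
  exact mm_roots π c n _ hfib hsum hc1 hn hcard hL

-- Graph 2 : K_1 ∇ K_{m,m}
theorem part2 (n : ℕ) (hn : 6 ≤ n) (hodd : Odd n) :
    (distLaplacian (graphJoin (⊤ : SimpleGraph (Fin 1))
        (completeBipartiteGraph (Fin ((n - 1) / 2)) (Fin ((n - 1) / 2))))).charpoly.roots =
      Multiset.replicate (n - 3) ((3 * (n : ℝ) - 1) / 2) +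
        Multiset.replicate 2 (n : ℝ) + {0} := by
  obtain ⟨q, hq⟩ := hodd
  set m := (n - 1) / 2 with hm
  have hm2 : 2 * m = n - 1 := by omega
  have hmpos : 1 ≤ m := by omega
  set π : Fin 1 ⊕ (Fin m ⊕ Fin m) → Fin 3 :=
    Sum.elim (fun _ => 0) (Sum.elim (fun _ => 1) (fun _ => 2)) with hπ
  set c : Fin 3 → ℕ := ![1, m, m] with hc
  have hmR : 2 * (m : ℝ) = (n : ℝ) - 1 := by
    have : ((2 * m : ℕ) : ℝ) = ((n - 1 : ℕ) : ℝ) := by rw [hm2]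
    rw [Nat.cast_sub (by omega)] at this
    push_cast at this
    linarith
  have hAdj : ∀ i j, (graphJoin (⊤ : SimpleGraph (Fin 1))
      (completeBipartiteGraph (Fin m) (Fin m))).Adj i j ↔ π i ≠ π j := by
    rintro (a | b | b) (a' | b' | b')
    · show (⊤ : SimpleGraph (Fin 1)).Adj a a' ↔ (0 : Fin 3) ≠ 0
      simp [Subsingleton.elim a a']
    · show True ↔ (0 : Fin 3) ≠ 1
      simp
    · show True ↔ (0 : Fin 3) ≠ 2
      simp
    · show True ↔ (1 : Fin 3) ≠ 0
      simp
    · show (completeBipartiteGraph (Fin m) (Fin m)).Adj (Sum.inl b) (Sum.inl b')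
        ↔ (1 : Fin 3) ≠ 1
      simp [completeBipartiteGraph]
    · show (completeBipartiteGraph (Fin m) (Fin m)).Adj (Sum.inl b) (Sum.inr b')
        ↔ (1 : Fin 3) ≠ 2
      simp [completeBipartiteGraph]
    · show True ↔ (2 : Fin 3) ≠ 0
      simp
    · show (completeBipartiteGraph (Fin m) (Fin m)).Adj (Sum.inr b) (Sum.inl b')
        ↔ (2 : Fin 3) ≠ 1
      simp [completeBipartiteGraph]
    · show (completeBipartiteGraph (Fin m) (Fin m)).Adj (Sum.inr b) (Sum.inr b')
        ↔ (2 : Fin 3) ≠ 2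
      simp [completeBipartiteGraph]
  have hsurj : ∀ s : Fin 3, ∃ v, π v = s := by
    intro s
    fin_cases s
    · exact ⟨Sum.inl 0, rfl⟩
    · exact ⟨Sum.inr (Sum.inl ⟨0, by omega⟩), rfl⟩
    · exact ⟨Sum.inr (Sum.inr ⟨0, by omega⟩), rfl⟩
  have hfib : ∀ s, (Finset.univ.filter fun x => π x = s).card = c s := by
    intro s
    rw [Finset.card_filter, Fintype.sum_sum_type, Fintype.sum_sum_type]
    fin_cases s
    · simp [hπ, hc]
    · simp [hπ, hc]
    · simp [hπ, hc]
  have hcard : Fintype.card (Fin 1 ⊕ (Fin m ⊕ Fin m)) = n := by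
    simp; omega
  have hsum : c 0 + c 1 + c 2 = n := by simp [hc]; omega
  have hc1 : ∀ s, 1 ≤ c s := by
    intro s; fin_cases s <;> simp [hc] <;> omega
  have hL : ∀ s, c s = 1 ∨ (n : ℝ) + (c s : ℝ) = (3 * (n : ℝ) - 1) / 2 := by
    intro s
    fin_cases s
    · left; rfl
    · right
      show (n : ℝ) + (m : ℝ) = _
      linarith
    · right
      show (n : ℝ) + (m : ℝ) = _
      linarith
  rw [distLaplacian_eq_mm _ π c n hAdj hsurj hfib hcard]
  exact mm_roots π c n _ hfib hsum hc1 hn hcard hL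

-- Graph 3 : K_{n/3,n/3,n/3}
theorem part3 (n : ℕ) (hn : 6 ≤ n) (hdvd : 3 ∣ n) :
    (distLaplacian (SimpleGraph.completeMultipartiteGraph
        (fun _ : Fin 3 => Fin (n / 3)))).charpoly.roots =
      Multiset.replicate (n - 3) (4 * (n : ℝ) / 3) +
        Multiset.replicate 2 (n : ℝ) + {0} := by
  set k := n / 3 with hkdef
  have hk3 : 3 * k = n := by omega
  have hkpos : 1 ≤ k := by omega
  set π : (Σ _ : Fin 3, Fin k) → Fin 3 := Sigma.fst with hπ
  set c : Fin 3 → ℕ := fun _ => k with hc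
  have hkR : 3 * (k : ℝ) = (n : ℝ) := by exact_mod_cast congrArg (Nat.cast : ℕ → ℝ) hk3
  have hAdj : ∀ i j, (SimpleGraph.completeMultipartiteGraph
      (fun _ : Fin 3 => Fin k)).Adj i j ↔ π i ≠ π j := fun i j => Iff.rfl
  have hsurj : ∀ s : Fin 3, ∃ v, π v = s := fun s => ⟨⟨s, ⟨0, by omega⟩⟩, rfl⟩
  have hfib : ∀ s, (Finset.univ.filter fun x => π x = s).card = c s := by
    intro s
    rw [Finset.card_filter, ← Finset.univ_sigma_univ, Finset.sum_sigma]
    have inner : ∀ i : Fin 3, (∑ _a : Fin k, if i = s then 1 else 0) =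
        if i = s then k else 0 := by
      intro i; split <;> simp
    rw [Finset.sum_congr rfl fun i _ => inner i, Finset.sum_ite_eq' Finset.univ s fun _ => k,
      if_pos (Finset.mem_univ s)]
  have hcard : Fintype.card (Σ _ : Fin 3, Fin k) = n := by
    simp [Fintype.card_sigma]; omega
  have hsum : c 0 + c 1 + c 2 = n := by simp [hc]; omega
  have hc1 : ∀ s, 1 ≤ c s := fun s => hkpos
  have hL : ∀ s, c s = 1 ∨ (n : ℝ) + (c s : ℝ) = 4 * (n : ℝ) / 3 := by
    intro s
    right
    show (n : ℝ) + (k : ℝ) = _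
    linarith
  rw [distLaplacian_eq_mm _ π c n hAdj hsurj hfib hcard]
  exact mm_roots π c n _ hfib hsum hc1 hn hcard hL

end Apply

/-- For `n ≥ 6`: the distance Laplacian spectrum of `K₂ ∇ (n-2)K₁` is
`{(2n-2)^{n-3}, n², 0}`; for odd `n` the distance Laplacian spectrum of
`K₁ ∇ K_{(n-1)/2,(n-1)/2}` is `{((3n-1)/2)^{n-3}, n², 0}`; and for `3 ∣ n` the distance
Laplacian spectrum of `K_{n/3,n/3,n/3}` is `{(4n/3)^{n-3}, n², 0}`.  (Here `n²` means the
eigenvalue `n` with multiplicity `2`.) -/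
theorem distLaplacian_spectra_of_H2_graphs (n : ℕ) (hn : 6 ≤ n) :
    (distLaplacian (graphJoin (⊤ : SimpleGraph (Fin 2))
        (⊥ : SimpleGraph (Fin (n - 2))))).charpoly.roots =
      Multiset.replicate (n - 3) (2 * (n : ℝ) - 2) +
        Multiset.replicate 2 (n : ℝ) + {0} ∧
    (Odd n → (distLaplacian (graphJoin (⊤ : SimpleGraph (Fin 1))
        (completeBipartiteGraph (Fin ((n - 1) / 2)) (Fin ((n - 1) / 2))))).charpoly.roots =
      Multiset.replicate (n - 3) ((3 * (n : ℝ) - 1) / 2) +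
        Multiset.replicate 2 (n : ℝ) + {0}) ∧
    (3 ∣ n → (distLaplacian (SimpleGraph.completeMultipartiteGraph
        (fun _ : Fin 3 => Fin (n / 3)))).charpoly.roots =
      Multiset.replicate (n - 3) (4 * (n : ℝ) / 3) +
        Multiset.replicate 2 (n : ℝ) + {0}) := by
  exact ⟨part1 n hn, fun hodd => part2 n hn hodd, fun hdvd => part3 n hn hdvd⟩
end Hermitian
end

section
/- Let G be a connected simple graph on n vertices with diameter at most 2, and let μ_1 ≥ μ_2 ≥ ⋯ ≥ μ_{n−1} ≥ μ_n = 0 be the eigenvalues of its (ordinary) Laplacian matrix. Then the eigenvalues of the distance Laplacian matrix of G are 2n − μ_{n−1} ≥ 2n − μ_{n−2} ≥ ⋯ ≥ 2n − μ_1 and 0. Moreover, for each i ∈ {1,…,n−1}, the eigenspace of the Laplacian for μ_i equals the eigenspace of the distance Laplacian for 2n − μ_i. -/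
open Matrix Polynomial Finset

/- ################# auxiliary lemmas ################# -/

lemma charpoly_conj' {m : Type*} [Fintype m] [DecidableEq m] (P Q M : Matrix m m ℝ)
    (hPQ : P * Q = 1) :
    (P * M * Q).charpoly = M.charpoly := by
  have hmapPQ : P.map (C : ℝ →+* Polynomial ℝ) * Q.map C = 1 := by
    rw [← Matrix.map_mul, hPQ]; simp
  have hscal : P.map (C : ℝ →+* Polynomial ℝ) * (scalar m (X : Polynomial ℝ)) * Q.map C
      = scalar m (X : Polynomial ℝ) := by
    rw [(Matrix.scalar_commute (X : Polynomial ℝ) (Commute.all X) (P.map C)).symm.eq,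
      mul_assoc, hmapPQ, mul_one]
  have key : charmatrix (P * M * Q) = P.map (C : ℝ →+* Polynomial ℝ) * charmatrix M * Q.map C := by
    rw [charmatrix, charmatrix, mul_sub, sub_mul, hscal]
    congr 1
    simp only [RingHom.mapMatrix_apply]
    rw [← Matrix.map_mul, ← Matrix.map_mul]
  rw [Matrix.charpoly, Matrix.charpoly, key, det_mul, det_mul, mul_comm, ← mul_assoc]
  rw [mul_comm ((Q.map (C : ℝ →+* Polynomial ℝ)).det), ← det_mul, hmapPQ, det_one, one_mul]

lemma charpoly_roots_diagonal {m : Type*} [Fintype m] [DecidableEq m] (d : m → ℝ) :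
    (Matrix.diagonal d).charpoly.roots = (univ : Finset m).val.map d := by
  have h : charmatrix (Matrix.diagonal d)
      = Matrix.diagonal (fun i => (X : Polynomial ℝ) - C (d i)) := by
    ext i j
    by_cases hij : i = j
    · subst hij; rw [charmatrix_apply_eq, diagonal_apply_eq, diagonal_apply_eq]
    · rw [charmatrix_apply_ne _ _ _ hij, diagonal_apply_ne _ hij, diagonal_apply_ne _ hij]
      simp
  rw [Matrix.charpoly, h, det_diagonal]
  have : ∏ i : m, ((X : Polynomial ℝ) - C (d i))
      = (((univ : Finset m).val.map d).map (fun a => (X : Polynomial ℝ) - C a)).prod := by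
    rw [Multiset.map_map]
    rfl
  rw [this, roots_multiset_prod_X_sub_C]

section Aux

variable {n : ℕ} (G : SimpleGraph (Fin n)) [DecidableRel G.Adj]

lemma dist_formula (hG : G.Connected) (hd : G.diam ≤ 2) (i j : Fin n) :
    (G.dist i j : ℝ) = 2 - (G.adjMatrix ℝ) i j - 2 * (1 : Matrix (Fin n) (Fin n) ℝ) i j := by
  have hne : G.ediam ≠ ⊤ := by
    have : Nonempty (Fin n) := hG.nonempty
    obtain ⟨u, v, huv⟩ := SimpleGraph.exists_edist_eq_ediam_of_finite (G := G)
    rw [← huv, SimpleGraph.edist_ne_top_iff_reachable]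
    exact hG.preconnected u v
  have hle : G.dist i j ≤ 2 := (SimpleGraph.dist_le_diam hne).trans hd
  by_cases hij : i = j
  · subst hij
    simp [SimpleGraph.dist_self, Matrix.one_apply]
  · by_cases hadj : G.Adj i j
    · rw [SimpleGraph.dist_eq_one_iff_adj.mpr hadj]
      simp [hadj, Matrix.one_apply, hij]
      norm_num
    · have h0 : G.dist i j ≠ 0 := Nat.pos_iff_ne_zero.mp (hG.pos_dist_of_ne hij)
      have h1 : G.dist i j ≠ 1 := fun h => hadj (SimpleGraph.dist_eq_one_iff_adj.mp h)
      have h2 : G.dist i j = 2 := by omega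
      rw [h2]
      simp [hadj, Matrix.one_apply, hij]

lemma distLap_eq (hG : G.Connected) (hd : G.diam ≤ 2) :
    distLaplacian G = (2 * (n : ℝ)) • (1 : Matrix (Fin n) (Fin n) ℝ)
      - (2 : ℝ) • (Matrix.of fun _ _ => (1 : ℝ)) - G.lapMatrix ℝ := by
  ext i j
  by_cases hij : i = j
  · subst hij
    simp only [distLaplacian, Matrix.of_apply, if_pos rfl, Matrix.sub_apply, Matrix.smul_apply,
      Matrix.one_apply_eq, SimpleGraph.lapMatrix, Matrix.sub_apply, SimpleGraph.degMatrix,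
      Matrix.of_apply, SimpleGraph.adjMatrix_apply, smul_eq_mul, mul_one]
    rw [Finset.sum_congr rfl (fun k _ => dist_formula G hG hd i k)]
    have hdeg : ∑ k : Fin n, (G.adjMatrix ℝ) i k = G.degree i := by
      simp [SimpleGraph.adjMatrix, SimpleGraph.degree, SimpleGraph.neighborFinset]
    rw [Finset.sum_sub_distrib, Finset.sum_sub_distrib, hdeg]
    simp [Matrix.one_apply, SimpleGraph.adjMatrix_apply, Finset.sum_ite_eq, mul_comm]
    ring
  · simp only [distLaplacian, Matrix.of_apply, if_neg hij, Matrix.sub_apply, Matrix.smul_apply,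
      Matrix.one_apply_ne hij, SimpleGraph.lapMatrix, Matrix.sub_apply, SimpleGraph.degMatrix,
      Matrix.of_apply, if_neg hij, SimpleGraph.adjMatrix_apply, smul_eq_mul, mul_zero]
    rw [dist_formula G hG hd i j]
    simp [Matrix.one_apply, hij]
    ring

lemma distLap_mulVec (hG : G.Connected) (hd : G.diam ≤ 2) (x : Fin n → ℝ) :
    distLaplacian G *ᵥ x =
      (2 * (n : ℝ)) • x - (2 * ∑ k, x k) • (fun _ => (1 : ℝ)) - G.lapMatrix ℝ *ᵥ x := by
  rw [distLap_eq G hG hd, Matrix.sub_mulVec, Matrix.sub_mulVec, Matrix.smul_mulVec,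
    Matrix.one_mulVec, Matrix.smul_mulVec]
  congr 1
  congr 1
  funext i
  simp [Matrix.mulVec, dotProduct]

lemma sum_lap_mulVec (x : Fin n → ℝ) : ∑ j, (G.lapMatrix ℝ *ᵥ x) j = 0 := by
  have hsym := G.isSymm_lapMatrix (R := ℝ)
  have hcol : ∀ k : Fin n, ∑ j, (G.lapMatrix ℝ) j k = 0 := by
    intro k
    have := congrFun (G.lapMatrix_mulVec_const_eq_zero (R := ℝ)) k
    simp only [Matrix.mulVec, dotProduct, mul_one, Pi.zero_apply] at this
    calc ∑ j, (G.lapMatrix ℝ) j k = ∑ j, (G.lapMatrix ℝ) k j := by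
          refine Finset.sum_congr rfl fun j _ => ?_
          exact (hsym.apply k j)
      _ = 0 := this
  simp only [Matrix.mulVec, dotProduct]
  rw [Finset.sum_comm]
  simp_rw [← Finset.sum_mul]
  simp [hcol]

lemma sum_eq_zero_of_eig {μ : ℝ} (hμ : μ ≠ 0) {x : Fin n → ℝ}
    (hx : G.lapMatrix ℝ *ᵥ x = μ • x) : ∑ k, x k = 0 := by
  have h := sum_lap_mulVec G x
  rw [hx] at h
  simp only [Pi.smul_apply, smul_eq_mul, ← Finset.mul_sum] at h
  exact (mul_eq_zero.mp h).resolve_left hμ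

lemma not_eig_two_n (hG : G.Connected) {x : Fin n → ℝ} (hx : x ≠ 0)
    (h : G.lapMatrix ℝ *ᵥ x = (2 * (n : ℝ)) • x) : False := by
  have hn : Nonempty (Fin n) := hG.nonempty
  have hn1 : (1 : ℝ) ≤ n := by
    have := Fin.pos_iff_nonempty.mpr hn
    exact_mod_cast this
  have hq : Matrix.toLinearMap₂' ℝ (G.lapMatrix ℝ) x x
      = (∑ i : Fin n, ∑ j : Fin n, if G.Adj i j then (x i - x j)^2 else 0) / 2 :=
    G.lapMatrix_toLinearMap₂' ℝ x
  have hq2 : Matrix.toLinearMap₂' ℝ (G.lapMatrix ℝ) x x = 2 * (n : ℝ) * ∑ k, (x k)^2 := by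
    rw [Matrix.toLinearMap₂'_apply', h]
    simp only [dotProduct, Pi.smul_apply, smul_eq_mul]
    rw [Finset.mul_sum]
    congr 1; funext k; ring
  have hxx : 0 < ∑ k, (x k)^2 := by
    have hne : ∃ k, x k ≠ 0 := by
      by_contra hc
      push_neg at hc
      exact hx (funext hc)
    obtain ⟨k, hk⟩ := hne
    have h0 : (0:ℝ) < (x k)^2 := by positivity
    exact lt_of_lt_of_le h0
      (Finset.single_le_sum (f := fun k => (x k)^2) (fun i _ => sq_nonneg _) (mem_univ k))
  have hbound : (∑ i : Fin n, ∑ j : Fin n, if G.Adj i j then (x i - x j)^2 else 0) / 2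
      ≤ (n : ℝ) * ∑ k, (x k)^2 := by
    have h1 : (∑ i : Fin n, ∑ j : Fin n, if G.Adj i j then (x i - x j)^2 else 0)
        ≤ ∑ i : Fin n, ∑ j : Fin n, (x i - x j)^2 := by
      refine Finset.sum_le_sum fun i _ => Finset.sum_le_sum fun j _ => ?_
      split_ifs
      · exact le_refl _
      · positivity
    have hrow : ∀ i, ∑ j, (x i - x j)^2
        = (n:ℝ) * x i^2 - 2 * x i * (∑ k, x k) + ∑ k, (x k)^2 := by
      intro i
      have he : ∀ j, (x i - x j)^2 = x i ^2 - 2 * x i * x j + x j ^ 2 := fun j => by ring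
      simp_rw [he, Finset.sum_add_distrib, Finset.sum_sub_distrib, Finset.sum_const,
        card_univ, Fintype.card_fin, nsmul_eq_mul, ← Finset.mul_sum]
    have h2 : ∑ i : Fin n, ∑ j : Fin n, (x i - x j)^2
        = 2 * (n : ℝ) * ∑ k, (x k)^2 - 2 * (∑ k, x k)^2 := by
      rw [Finset.sum_congr rfl (fun i _ => hrow i)]
      simp_rw [Finset.sum_add_distrib, Finset.sum_sub_distrib, ← Finset.mul_sum,
        ← Finset.sum_mul, Finset.sum_const, card_univ, Fintype.card_fin, nsmul_eq_mul]
      rw [← Finset.mul_sum]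
      ring
    calc _ ≤ (∑ i : Fin n, ∑ j : Fin n, (x i - x j)^2)/2 := by linarith
      _ = ((n:ℝ) * ∑ k, (x k)^2) - (∑ k, x k)^2 := by rw [h2]; ring
      _ ≤ _ := by nlinarith [sq_nonneg (∑ k, x k)]
  rw [hq] at hq2
  nlinarith [mul_le_mul_of_nonneg_right hn1 (le_of_lt hxx)]

lemma unique_zero_eig (hG : G.Connected)
    (hL : (G.lapMatrix ℝ).IsHermitian) :
    ∃ i0 : Fin n, hL.eigenvalues i0 = 0 ∧ ∀ i : Fin n, hL.eigenvalues i = 0 → i = i0 := by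
  have hn : Nonempty (Fin n) := hG.nonempty
  have hnn : 1 ≤ n := Fin.pos_iff_nonempty.mpr hn
  have hcc : Fintype.card G.ConnectedComponent = 1 := by
    rw [Fintype.card_eq_one_iff]
    refine ⟨G.connectedComponentMk (Classical.arbitrary _), ?_⟩
    intro c
    refine SimpleGraph.ConnectedComponent.ind (fun v => ?_) c
    exact SimpleGraph.ConnectedComponent.sound (hG.preconnected v _)
  have hker : Module.finrank ℝ (LinearMap.ker (G.lapMatrix ℝ).mulVecLin) = 1 := by
    rw [← Matrix.toLin'_apply', ← SimpleGraph.card_connectedComponent_eq_finrank_ker_toLin'_lapMatrix]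
    exact hcc
  have hrn : (G.lapMatrix ℝ).rank + 1 = n := by
    rw [Matrix.rank, ← hker, LinearMap.finrank_range_add_finrank_ker]
    simp
  have hrank : (G.lapMatrix ℝ).rank = Fintype.card {i // hL.eigenvalues i ≠ 0} :=
    hL.rank_eq_card_non_zero_eigs
  have hcompl : Fintype.card {i : Fin n // ¬ hL.eigenvalues i = 0}
      = n - Fintype.card {i : Fin n // hL.eigenvalues i = 0} := by
    rw [Fintype.card_subtype_compl]
    simp
  have hle : Fintype.card {i : Fin n // hL.eigenvalues i = 0} ≤ n := by
    have := Fintype.card_subtype_le (fun i : Fin n => hL.eigenvalues i = 0)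
    simpa using this
  have hcard : Fintype.card {i : Fin n // hL.eigenvalues i = 0} = 1 := by
    rw [hrank] at hrn
    simp only [ne_eq] at hrn
    omega
  obtain ⟨⟨i0, hi0⟩, hu⟩ := Fintype.card_eq_one_iff.mp hcard
  exact ⟨i0, hi0, fun i hi => congrArg Subtype.val (hu ⟨i, hi⟩)⟩

lemma dm_basis_action (hG : G.Connected) (hd : G.diam ≤ 2)
    (hL : (G.lapMatrix ℝ).IsHermitian) (j : Fin n) :
    distLaplacian G *ᵥ ⇑(hL.eigenvectorBasis j) =
      (if hL.eigenvalues j = 0 then 0 else 2 * (n : ℝ) - hL.eigenvalues j)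
        • ⇑(hL.eigenvectorBasis j) := by
  set b : Fin n → ℝ := ⇑(hL.eigenvectorBasis j) with hb
  have hLb : G.lapMatrix ℝ *ᵥ b = hL.eigenvalues j • b := hL.mulVec_eigenvectorBasis j
  by_cases h0 : hL.eigenvalues j = 0
  · have hker : G.lapMatrix ℝ *ᵥ b = 0 := by rw [hLb, h0, zero_smul]
    have hconst : ∀ i k : Fin n, b i = b k := by
      have := (G.lapMatrix_mulVec_eq_zero_iff_forall_reachable (x := b)).mp hker
      intro i k; exact this i k (hG.preconnected i k)
    rw [distLap_mulVec G hG hd, hker, if_pos h0, zero_smul, sub_zero]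
    funext i
    have hsb : ∑ k, b k = (n : ℝ) * b i := by
      rw [Finset.sum_congr rfl (fun k _ => hconst k i)]
      simp [Finset.card_univ, mul_comm]
    simp only [Pi.sub_apply, Pi.smul_apply, smul_eq_mul, Pi.zero_apply, hsb]
    ring
  · have hs : ∑ k, b k = 0 := sum_eq_zero_of_eig G h0 hLb
    rw [distLap_mulVec G hG hd, hLb, hs, if_neg h0]
    funext i
    simp only [Pi.sub_apply, Pi.smul_apply, smul_eq_mul, mul_zero, zero_smul, Pi.zero_apply]
    ring

lemma dm_diag (hG : G.Connected) (hd : G.diam ≤ 2)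
    (hL : (G.lapMatrix ℝ).IsHermitian) :
    distLaplacian G =
      (hL.eigenvectorUnitary : Matrix (Fin n) (Fin n) ℝ)
        * Matrix.diagonal (fun j => if hL.eigenvalues j = 0 then 0
            else 2 * (n : ℝ) - hL.eigenvalues j)
        * star (hL.eigenvectorUnitary : Matrix (Fin n) (Fin n) ℝ) := by
  set U : Matrix (Fin n) (Fin n) ℝ := (hL.eigenvectorUnitary : Matrix (Fin n) (Fin n) ℝ)
  set f : Fin n → ℝ := fun j => if hL.eigenvalues j = 0 then 0
    else 2 * (n : ℝ) - hL.eigenvalues j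
  have hUU : U * star U = 1 := Matrix.mem_unitaryGroup_iff.mp hL.eigenvectorUnitary.2
  have hDU : distLaplacian G * U = U * Matrix.diagonal f := by
    ext i j
    have h1 : (distLaplacian G * U) i j = (distLaplacian G *ᵥ fun k => U k j) i := rfl
    have h2 : (fun k => U k j) = ⇑(hL.eigenvectorBasis j) := by
      funext k; exact Matrix.IsHermitian.eigenvectorUnitary_apply hL k j
    rw [h1, h2, dm_basis_action G hG hd hL j, Matrix.mul_diagonal]
    simp only [Pi.smul_apply, smul_eq_mul]
    rw [← h2]
    exact mul_comm _ _
  calc distLaplacian G = distLaplacian G * (U * star U) := by rw [hUU, mul_one]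
    _ = (distLaplacian G * U) * star U := by rw [mul_assoc]
    _ = U * Matrix.diagonal f * star U := by rw [hDU]

end Aux

/-- Let `G` be a connected graph on `n` vertices with diameter at most 2,
with Laplacian eigenvalues `μ₁ ≥ ⋯ ≥ μ_{n-1} ≥ μ_n = 0`. Then the distance Laplacian
eigenvalues of `G` are `2n - μ_{n-1} ≥ ⋯ ≥ 2n - μ₁` together with `0` (stated as an equality
of multisets of eigenvalues, where one copy of the eigenvalue `0` of the Laplacian is removed
and replaced by the eigenvalue `0` of the distance Laplacian); moreover, for each nonzero
Laplacian eigenvalue `μ`, the eigenspace of the Laplacian for `μ` equals the eigenspace of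
the distance Laplacian for `2n - μ`. -/
theorem distLaplacian_spectrum_of_diam_le_two
    (n : ℕ) (G : SimpleGraph (Fin n)) [DecidableRel G.Adj] (hG : G.Connected)
    (hd : G.diam ≤ 2) :
    (distLaplacian G).charpoly.roots =
        (((G.lapMatrix ℝ).charpoly.roots.erase 0).map fun μ : ℝ => 2 * (n : ℝ) - μ) + {0} ∧
      ∀ μ : ℝ, μ ≠ 0 → Module.End.HasEigenvalue (G.lapMatrix ℝ).mulVecLin μ →
        Module.End.eigenspace (G.lapMatrix ℝ).mulVecLin μ =
          Module.End.eigenspace (distLaplacian G).mulVecLin (2 * (n : ℝ) - μ) := by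
  have hL : (G.lapMatrix ℝ).IsHermitian := (SimpleGraph.posSemidef_lapMatrix ℝ G).1
  set U : Matrix (Fin n) (Fin n) ℝ := (hL.eigenvectorUnitary : Matrix (Fin n) (Fin n) ℝ) with hU
  set ev : Fin n → ℝ := hL.eigenvalues with hev
  set f : Fin n → ℝ := fun j => if ev j = 0 then 0 else 2 * (n : ℝ) - ev j with hf
  have hUU : U * star U = 1 := Matrix.mem_unitaryGroup_iff.mp hL.eigenvectorUnitary.2
  constructor
  · -- the multiset identity
    have hrootsD : (distLaplacian G).charpoly.roots = (univ : Finset (Fin n)).val.map f := by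
      rw [dm_diag G hG hd hL, charpoly_conj' _ _ _ hUU, charpoly_roots_diagonal]
    have hrootsL : (G.lapMatrix ℝ).charpoly.roots = (univ : Finset (Fin n)).val.map ev := by
      have hspec := hL.spectral_theorem
      rw [RCLike.ofReal_real_eq_id] at hspec
      simp only [Function.id_comp] at hspec
      conv_lhs => rw [hspec]
      rw [Unitary.conjStarAlgAut_apply, charpoly_conj' _ _ _ hUU, charpoly_roots_diagonal]
    obtain ⟨i0, hi0, hu⟩ := unique_zero_eig G hG hL
    have hi0mem : i0 ∈ (univ : Finset (Fin n)).val := Finset.mem_univ_val i0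
    set t : Multiset (Fin n) := (univ : Finset (Fin n)).val.erase i0 with ht
    have hcons : (univ : Finset (Fin n)).val = i0 ::ₘ t := (Multiset.cons_erase hi0mem).symm
    have htne : ∀ i ∈ t, ev i ≠ 0 := by
      intro i hi
      have hnd : (univ : Finset (Fin n)).val.Nodup := (univ : Finset (Fin n)).nodup
      have : i ≠ i0 := (hnd.mem_erase_iff.mp hi).1
      exact fun h => this (hu i h)
    rw [hrootsD, hrootsL, hcons]
    have hi0' : ev i0 = 0 := hi0
    rw [Multiset.map_cons, Multiset.map_cons, hi0']
    rw [Multiset.erase_cons_head]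
    have h1 : t.map f = t.map (fun i => 2 * (n : ℝ) - ev i) := by
      refine Multiset.map_congr rfl fun i hi => ?_
      simp only [hf, if_neg (htne i hi)]
    have h2 : (t.map ev).map (fun μ : ℝ => 2 * (n : ℝ) - μ) = t.map (fun i => 2 * (n : ℝ) - ev i) :=
      Multiset.map_map _ _ _
    rw [h1, h2]
    have hfz : f i0 = 0 := by simp [hf, hi0']
    rw [hfz]
    rw [add_comm, ← Multiset.singleton_add]
  · -- eigenspaces
    intro μ hμ hasEig
    have hμ2n : μ ≠ 2 * (n : ℝ) := by
      intro hcontra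
      obtain ⟨v, hv⟩ := hasEig.exists_hasEigenvector
      refine not_eig_two_n G hG hv.2 ?_
      have := hv.apply_eq_smul
      rw [Matrix.mulVecLin_apply] at this
      rw [← hcontra]
      exact this
    ext x
    simp only [Module.End.mem_eigenspace_iff, Matrix.mulVecLin_apply]
    constructor
    · intro hx
      have hs : ∑ k, x k = 0 := sum_eq_zero_of_eig G hμ hx
      rw [distLap_mulVec G hG hd, hx, hs]
      funext i
      simp only [Pi.sub_apply, Pi.smul_apply, smul_eq_mul, mul_zero, zero_smul, Pi.zero_apply]
      ring
    · intro hx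
      have hLx : G.lapMatrix ℝ *ᵥ x = μ • x - (2 * ∑ k, x k) • (fun _ => (1 : ℝ)) := by
        have hmv := distLap_mulVec G hG hd x
        rw [hx] at hmv
        funext i
        have := congrFun hmv i
        simp only [Pi.sub_apply, Pi.smul_apply, smul_eq_mul] at this ⊢
        linarith
      have hsum0 : ∑ j, (G.lapMatrix ℝ *ᵥ x) j = 0 := sum_lap_mulVec G x
      rw [hLx] at hsum0
      simp only [Pi.sub_apply, Pi.smul_apply, smul_eq_mul, mul_one, Finset.sum_sub_distrib,
        ← Finset.mul_sum, Finset.sum_const, card_univ, Fintype.card_fin, nsmul_eq_mul] at hsum0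
      -- hsum0 : μ * S - 2 * S * n = 0 (roughly)
      have hS : ∑ k, x k = 0 := by
        by_contra hSne
        apply hμ2n
        have : (μ - 2 * (n:ℝ)) * (∑ k, x k) = 0 := by ring_nf; ring_nf at hsum0; linarith
        have := (mul_eq_zero.mp this).resolve_right hSne
        linarith
      rw [hLx, hS]
      funext i
      simp only [Pi.sub_apply, Pi.smul_apply, smul_eq_mul, mul_zero, zero_mul, mul_one]
      ring
end
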